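/- arXiv:math/0502296 — 4 statements merged into one kernel-verified Lean document; each statement's English description precedes it below -/
import Mathlib

section
/- Every elliptic function vanishes identically if it satisfies f(t+1) = f(t) and f(t+tau) = c*f(t) with c = exp(2*pi*i*w) not equal to any value exp(2*pi*i*n*tau) for integer n (more precisely: if f is entire, f(t+1) = f(t), f(t+tau) = exp(2*pi*i*w)*f(t), and w is not in Z + Z*tau, then f = 0). -/
open Complex MeasureTheory intervalIntegral

/-- Key contour lemma: for an entire 1-periodic function, the integral over a horizontal
segment of length 1 is independent of the translate. -/
lemma integral_shift_eq (g : ℂ → ℂ) (hg : Differentiable ℂ g)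
    (hper : ∀ t, g (t + 1) = g t) (τ : ℂ) :
    (∫ x in (0:ℝ)..1, g (↑x + τ)) = ∫ x in (0:ℝ)..1, g ↑x := by
  have hgc : Continuous g := hg.continuous
  have hg' : Continuous (deriv g) :=
    (hg.contDiff (n := 2)).continuous_deriv (by norm_num)
  -- derivative in the τ direction
  have key : ∀ (z : ℂ) (s : ℝ),
      HasDerivAt (fun s : ℝ => g (z + ↑s * τ)) (τ * deriv g (z + ↑s * τ)) s := by
    intro z s
    have h1 : HasDerivAt (fun y : ℂ => g (z + y * τ)) (deriv g (z + ↑s * τ) * τ) ↑s := by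
      have hl : HasDerivAt (fun y : ℂ => z + y * τ) τ ↑s := by
        simpa using ((hasDerivAt_id (↑s : ℂ)).mul_const τ).const_add z
      exact (hg.differentiableAt.hasDerivAt).comp _ hl
    simpa [mul_comm] using h1.comp_ofReal
  -- derivative in the real direction
  have keyx : ∀ (z : ℂ) (x : ℝ),
      HasDerivAt (fun x : ℝ => g (↑x + z)) (deriv g (↑x + z)) x := by
    intro z x
    have h1 : HasDerivAt (fun y : ℂ => g (y + z)) (deriv g (↑x + z) * 1) ↑x := by
      have hl : HasDerivAt (fun y : ℂ => y + z) 1 ↑x := (hasDerivAt_id _).add_const z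
      exact (hg.differentiableAt.hasDerivAt).comp _ hl
    simpa using h1.comp_ofReal
  have hc2 : Continuous fun p : ℝ × ℝ => τ * deriv g (↑p.1 + ↑p.2 * τ) := by
    fun_prop
  have inner_x : ∀ x : ℝ,
      g (↑x + τ) - g ↑x = ∫ s in (0:ℝ)..1, τ * deriv g (↑x + ↑s * τ) := by
    intro x
    have h := intervalIntegral.integral_eq_sub_of_hasDerivAt (a := (0:ℝ)) (b := (1:ℝ))
      (f := fun s : ℝ => g (↑x + ↑s * τ)) (f' := fun s : ℝ => τ * deriv g (↑x + ↑s * τ))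
      (fun s _ => key ↑x s)
      ((Continuous.intervalIntegrable (by fun_prop) _ _))
    simpa using h.symm
  have inner_s : ∀ s : ℝ, (∫ x in (0:ℝ)..1, τ * deriv g (↑x + ↑s * τ)) = 0 := by
    intro s
    rw [intervalIntegral.integral_const_mul]
    have h := intervalIntegral.integral_eq_sub_of_hasDerivAt (a := (0:ℝ)) (b := (1:ℝ))
      (f := fun x : ℝ => g (↑x + ↑s * τ)) (f' := fun x : ℝ => deriv g (↑x + ↑s * τ))
      (fun x _ => keyx (↑s * τ) x)
      ((Continuous.intervalIntegrable (by fun_prop) _ _))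
    rw [h]
    show τ * (g (↑(1:ℝ) + ↑s * τ) - g (↑(0:ℝ) + ↑s * τ)) = 0
    have heq10 : g (↑(1:ℝ) + ↑s * τ) = g (↑(0:ℝ) + ↑s * τ) := by
      have h' := hper (↑s * τ)
      push_cast
      rw [add_comm (1:ℂ)]
      simpa using h'
    rw [heq10, sub_self, mul_zero]
  have int1 : IntervalIntegrable (fun x : ℝ => g (↑x + τ)) volume 0 1 :=
    Continuous.intervalIntegrable (by fun_prop) _ _
  have int2 : IntervalIntegrable (fun x : ℝ => g ↑x) volume 0 1 :=
    Continuous.intervalIntegrable (by fun_prop) _ _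
  have diff_eq : (∫ x in (0:ℝ)..1, g (↑x + τ)) - (∫ x in (0:ℝ)..1, g ↑x)
      = ∫ x in (0:ℝ)..1, ∫ s in (0:ℝ)..1, τ * deriv g (↑x + ↑s * τ) := by
    rw [← intervalIntegral.integral_sub int1 int2]
    exact intervalIntegral.integral_congr fun x _ => inner_x x
  have swap : (∫ x in (0:ℝ)..1, ∫ s in (0:ℝ)..1, τ * deriv g (↑x + ↑s * τ))
      = ∫ s in (0:ℝ)..1, ∫ x in (0:ℝ)..1, τ * deriv g (↑x + ↑s * τ) := by
    have e1 : ∀ F : ℝ → ℂ, (∫ x in (0:ℝ)..1, F x)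
        = ∫ x, F x ∂(volume.restrict (Set.Ioc (0:ℝ) 1)) := by
      intro F
      rw [intervalIntegral.integral_of_le zero_le_one]
    have hInt : Integrable (Function.uncurry fun x s : ℝ => τ * deriv g (↑x + ↑s * τ))
        ((volume.restrict (Set.Ioc (0:ℝ) 1)).prod (volume.restrict (Set.Ioc (0:ℝ) 1))) := by
      rw [Measure.prod_restrict, ← Measure.volume_eq_prod]
      have hIcc : IntegrableOn (Function.uncurry fun x s : ℝ => τ * deriv g (↑x + ↑s * τ))
          (Set.Icc (0:ℝ) 1 ×ˢ Set.Icc (0:ℝ) 1) :=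
        (show Continuous (Function.uncurry fun x s : ℝ => τ * deriv g (↑x + ↑s * τ)) from
          hc2).continuousOn.integrableOn_compact (isCompact_Icc.prod isCompact_Icc)
      exact hIcc.mono_set (Set.prod_mono Set.Ioc_subset_Icc_self Set.Ioc_subset_Icc_self)
    rw [e1, e1]
    rw [show (fun x : ℝ => ∫ s in (0:ℝ)..1, τ * deriv g (↑x + ↑s * τ))
        = fun x : ℝ => ∫ s, τ * deriv g (↑x + ↑s * τ) ∂(volume.restrict (Set.Ioc (0:ℝ) 1))
        from funext fun x => e1 _]
    rw [show (fun s : ℝ => ∫ x in (0:ℝ)..1, τ * deriv g (↑x + ↑s * τ))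
        = fun s : ℝ => ∫ x, τ * deriv g (↑x + ↑s * τ) ∂(volume.restrict (Set.Ioc (0:ℝ) 1))
        from funext fun s => e1 _]
    exact MeasureTheory.integral_integral_swap hInt
  have hz : (∫ x in (0:ℝ)..1, g (↑x + τ)) - (∫ x in (0:ℝ)..1, g ↑x) = 0 := by
    rw [diff_eq, swap]
    simp only [inner_s]
    simp
  linear_combination hz

/-- If `f : ℂ → ℂ` is entire, `f(t+1) = f(t)`, `f(t+τ) = e^{2πiw} f(t)` with
`Im τ > 0` and `w ∉ ℤ + ℤτ`, then `f` vanishes identically. -/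
theorem entire_quasiperiodic_eq_zero (τ w : ℂ) (hτ : 0 < τ.im)
    (hw : ¬∃ m n : ℤ, w = (m : ℂ) + (n : ℂ) * τ)
    (f : ℂ → ℂ) (hf : Differentiable ℂ f)
    (h1 : ∀ t, f (t + 1) = f t)
    (h2 : ∀ t, f (t + τ) = Complex.exp (2 * (Real.pi : ℂ) * Complex.I * w) * f t) :
    f = 0 := by
  haveI : Fact ((0:ℝ) < 1) := ⟨one_pos⟩
  -- Step 1: all Fourier coefficients of f on [0,1] vanish
  have step1 : ∀ n : ℤ, (∫ x in (0:ℝ)..1,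
      f ↑x * Complex.exp (-(2 * (Real.pi : ℂ) * Complex.I * n * ↑x))) = 0 := by
    intro n
    set g : ℂ → ℂ := fun t => f t * Complex.exp (-(2 * (Real.pi : ℂ) * Complex.I * n * t))
      with hgdef
    have hg : Differentiable ℂ g := hf.mul (by fun_prop)
    have hper : ∀ t, g (t + 1) = g t := by
      intro t
      have he1 : Complex.exp (-(2 * (Real.pi : ℂ) * Complex.I * n * (t+1)))
          = Complex.exp (-(2 * (Real.pi : ℂ) * Complex.I * n * t)) := by
        rw [show -(2 * (Real.pi : ℂ) * Complex.I * n * (t+1))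
            = -(2 * (Real.pi : ℂ) * Complex.I * n * t) + ((-n : ℤ) : ℂ) * (2 * Real.pi * Complex.I)
            from by push_cast; ring,
          Complex.exp_add, Complex.exp_int_mul_two_pi_mul_I, mul_one]
      simp only [hgdef]
      rw [h1, he1]
    set q : ℂ := Complex.exp (2 * (Real.pi : ℂ) * Complex.I * (w - n * τ)) with hqdef
    have hquasi : ∀ t : ℂ, g (t + τ) = q * g t := by
      intro t
      have he : Complex.exp (2 * (Real.pi : ℂ) * Complex.I * w)
            * Complex.exp (-(2 * (Real.pi : ℂ) * Complex.I * n * (t+τ)))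
          = q * Complex.exp (-(2 * (Real.pi : ℂ) * Complex.I * n * t)) := by
        rw [hqdef, ← Complex.exp_add, ← Complex.exp_add]
        congr 1
        ring
      simp only [hgdef]
      rw [h2]
      linear_combination f t * he
    have hq1 : q ≠ 1 := by
      intro hq
      rw [hqdef, Complex.exp_eq_one_iff] at hq
      obtain ⟨m, hm⟩ := hq
      apply hw
      refine ⟨m, n, ?_⟩
      have hne : (2 * (Real.pi : ℂ) * Complex.I) ≠ 0 := by
        simp [Real.pi_ne_zero, Complex.I_ne_zero]
      have hv : w - n * τ = m := by
        apply mul_left_cancel₀ hne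
        rw [hm]; ring
      linear_combination hv
    have hkey := integral_shift_eq g hg hper τ
    have hq' : (∫ x in (0:ℝ)..1, g (↑x + τ)) = q * ∫ x in (0:ℝ)..1, g ↑x := by
      rw [← intervalIntegral.integral_const_mul]
      exact intervalIntegral.integral_congr fun x _ => hquasi ↑x
    have heq : (∫ x in (0:ℝ)..1, g ↑x) = q * ∫ x in (0:ℝ)..1, g ↑x := hkey.symm.trans hq'
    have h0 : (∫ x in (0:ℝ)..1, g ↑x) = 0 := by
      rcases mul_eq_zero.mp (show (q - 1) * (∫ x in (0:ℝ)..1, g ↑x) = 0 from by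
        linear_combination -heq) with h | h
      · exact absurd (by linear_combination h) hq1
      · exact h
    exact h0
  -- Step 2: the lifted function on AddCircle 1 is zero
  set F : AddCircle (1:ℝ) → ℂ := AddCircle.liftIco 1 0 (fun x : ℝ => f ↑x) with hFdef
  have hFcont : Continuous F := by
    apply AddCircle.liftIco_continuous
    · show f ((0:ℝ) : ℂ) = f (((0:ℝ) + 1 : ℝ) : ℂ)
      push_cast
      simpa using (h1 0).symm
    · exact (hf.continuous.comp Complex.continuous_ofReal).continuousOn
  have hcoeff : ∀ n : ℤ, fourierCoeff F n = 0 := by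
    intro n
    rw [hFdef, fourierCoeff_liftIco_eq, fourierCoeffOn_eq_integral]
    simp only [zero_add, sub_zero, one_div_one]
    rw [one_smul, ← step1 n]
    refine intervalIntegral.integral_congr fun x _ => ?_
    rw [fourier_coe_apply]
    simp only [smul_eq_mul]
    rw [mul_comm]
    congr 2
    push_cast
    ring
  set Fc : C(AddCircle (1:ℝ), ℂ) := ⟨F, hFcont⟩ with hFc
  have hzero : Fc = 0 := by
    have hcz : fourierCoeff (⇑Fc) = fun _ : ℤ => (0:ℂ) := funext fun n => hcoeff n
    have hsum : HasSum (fun i : ℤ => fourierCoeff (⇑Fc) i • fourier i) Fc :=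
      hasSum_fourier_series_of_summable (by rw [hcz]; exact summable_zero)
    have hfun : (fun i : ℤ => fourierCoeff (⇑Fc) i • fourier i)
        = fun _ : ℤ => (0 : C(AddCircle (1:ℝ), ℂ)) := by
      funext i
      rw [hcz]
      simp
    rw [hfun] at hsum
    exact (hsum.unique hasSum_zero)
  have hreal : ∀ x : ℝ, x ∈ Set.Ico (0:ℝ) 1 → f ↑x = 0 := by
    intro x hx
    have hFx : F ↑x = f ↑x := AddCircle.liftIco_coe_apply (by simpa using hx)
    rw [← hFx, show F = ⇑Fc from rfl, hzero]
    rfl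
  -- Step 3: identity theorem
  have han : AnalyticOnNhd ℂ f Set.univ := analyticOnNhd_univ_iff_differentiable.mpr hf
  have hfreq : ∃ᶠ z in nhdsWithin (0:ℂ) {(0:ℂ)}ᶜ, f z = 0 := by
    have h0 : Filter.Tendsto (fun k : ℕ => (1 / ((k:ℝ) + 2))) Filter.atTop (nhds 0) := by
      have hb : Filter.Tendsto (fun n : ℕ => 1 / ((n : ℝ) + 1)) Filter.atTop (nhds 0) :=
        tendsto_one_div_add_atTop_nhds_zero_nat
      have hcomp := hb.comp (Filter.tendsto_add_atTop_nat 1)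
      have : (fun k : ℕ => 1 / ((↑(k + 1) : ℝ) + 1)) = fun k : ℕ => 1 / ((k:ℝ) + 2) := by
        funext k; push_cast; ring_nf
      rwa [← this]
    have h1' : Filter.Tendsto (fun k : ℕ => ((1 / ((k:ℝ) + 2) : ℝ) : ℂ)) Filter.atTop
        (nhds 0) := by
      have := (Complex.continuous_ofReal.tendsto 0).comp h0
      simpa [Function.comp_def] using this
    have h2' : Filter.Tendsto (fun k : ℕ => ((1 / ((k:ℝ) + 2) : ℝ) : ℂ)) Filter.atTop
        (nhdsWithin (0:ℂ) {(0:ℂ)}ᶜ) := by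
      apply tendsto_nhdsWithin_of_tendsto_nhds_of_eventually_within _ h1'
      filter_upwards with k
      simp only [Set.mem_compl_iff, Set.mem_singleton_iff, Complex.ofReal_eq_zero]
      positivity
    refine h2'.frequently (Filter.Frequently.of_forall fun k => ?_)
    apply hreal
    constructor
    · positivity
    · rw [div_lt_one (by positivity)]
      nlinarith [Nat.cast_nonneg (α := ℝ) k]
  have hEq := han.eqOn_zero_of_preconnected_of_frequently_eq_zero isPreconnected_univ
    (Set.mem_univ 0) hfreq
  funext z
  exact hEq (Set.mem_univ z)
end

section
/- The sigma functions satisfy the three-term functional identity: sigma_{w1+w2}(t-u) * sigma_{w2}(s-t) - sigma_{w2}(s-u) * sigma_{w1}(t-u) + sigma_{w1}(t-s) * sigma_{w1+w2}(s-u) = 0, for all complex t, s, u at which all factors are defined and for generic parameters w1, w2. -/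
open Complex


open Complex Filter Topology Set Bornology

noncomputable section

namespace SigmaAux

def lat (τ z : ℂ) : Prop := ∃ m n : ℤ, z = (m : ℂ) + (n : ℂ) * τ

lemma lat_countable (τ : ℂ) : {z | lat τ z}.Countable := by
  have h : {z | lat τ z} ⊆ Set.range (fun p : ℤ × ℤ => (p.1 : ℂ) + (p.2 : ℂ) * τ) := by
    rintro z ⟨m, n, rfl⟩; exact ⟨(m, n), rfl⟩
  exact (Set.countable_range _).mono h

lemma lat.add {τ x y : ℂ} (hx : lat τ x) (hy : lat τ y) : lat τ (x + y) := by
  obtain ⟨m, n, rfl⟩ := hx; obtain ⟨m', n', rfl⟩ := hy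
  exact ⟨m + m', n + n', by push_cast; ring⟩

structure Good (τ : ℂ) (θ : ℂ → ℂ) : Prop where
  diff : Differentiable ℂ θ
  per1 : ∀ z, θ (z + 1) = -θ z
  per2 : ∀ z, θ (z + τ) =
    -Complex.exp (-(Real.pi : ℂ) * Complex.I * τ - 2 * (Real.pi : ℂ) * Complex.I * z) * θ z
  odd : ∀ z, θ (-z) = -θ z
  zero : ∀ z, θ z = 0 ↔ lat τ z
  simple : ∀ m n : ℤ, deriv θ ((m : ℂ) + (n : ℂ) * τ) ≠ 0

namespace Good

variable {τ : ℂ} {θ : ℂ → ℂ}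

lemma zero0 (H : Good τ θ) : θ 0 = 0 := (H.zero 0).2 ⟨0, 0, by simp⟩

lemma ne (H : Good τ θ) {z : ℂ} (h : ¬ lat τ z) : θ z ≠ 0 := fun h0 => h ((H.zero z).1 h0)

lemma per1' (H : Good τ θ) (z : ℂ) : θ (z - 1) = -θ z := by
  have h := H.per1 (z - 1)
  rw [sub_add_cancel] at h
  rw [h]; ring

lemma per2' (H : Good τ θ) (z : ℂ) : θ (z - τ) =
    -Complex.exp (-(Real.pi : ℂ) * Complex.I * τ + 2 * (Real.pi : ℂ) * Complex.I * z) * θ z := by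
  have h := H.per2 (z - τ)
  rw [sub_add_cancel] at h
  rw [h, ← mul_assoc, neg_mul_neg, ← Complex.exp_add]
  rw [show -(Real.pi : ℂ) * Complex.I * τ + 2 * (Real.pi : ℂ) * Complex.I * z +
      (-(Real.pi : ℂ) * Complex.I * τ - 2 * (Real.pi : ℂ) * Complex.I * (z - τ)) = 0 by ring]
  simp

end Good

/-- the main auxiliary function of `a` -/
def FF (θ : ℂ → ℂ) (w₁ w₂ b : ℂ) : ℂ → ℂ := fun a =>
  θ (w₁ + w₂ - a) * θ (w₂ - b) * θ w₁ * θ (a + b)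
    - θ (w₂ - a - b) * θ (w₁ - a) * θ (w₁ + w₂) * θ b
    - θ (w₁ + b) * θ (w₁ + w₂ - a - b) * θ w₂ * θ a

def DD (θ : ℂ → ℂ) (w₁ w₂ b : ℂ) : ℂ → ℂ := fun a => θ (w₁ + w₂ - a) * θ (a + b)

section FD

variable {τ : ℂ} {θ : ℂ → ℂ} (w₁ w₂ b : ℂ)

lemma FF_diff (H : Good τ θ) : Differentiable ℂ (FF θ w₁ w₂ b) := by
  unfold FF
  have h1 : ∀ c : ℂ, Differentiable ℂ (fun a => θ (c - a)) := fun c =>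
    H.diff.comp ((differentiable_const c).sub differentiable_id)
  have h2 : ∀ c : ℂ, Differentiable ℂ (fun a => θ (a + c)) := fun c =>
    H.diff.comp (differentiable_id.add_const c)
  have h3 : ∀ c d : ℂ, Differentiable ℂ (fun a => θ (c - a - d)) := fun c d =>
    H.diff.comp (((differentiable_const c).sub differentiable_id).sub_const d)
  exact ((((h1 (w₁+w₂)).mul (differentiable_const _)).mul (differentiable_const _)).mul (h2 b)).sub
    ((((h3 w₂ b).mul (h1 w₁)).mul (differentiable_const _)).mul (differentiable_const _)) |>.sub
    ((((differentiable_const _).mul (h3 (w₁+w₂) b)).mul (differentiable_const _)).mul H.diff)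

lemma DD_diff (H : Good τ θ) : Differentiable ℂ (DD θ w₁ w₂ b) := by
  unfold DD
  exact (H.diff.comp ((differentiable_const (w₁+w₂)).sub differentiable_id)).mul
    (H.diff.comp (differentiable_id.add_const b))

lemma FF_per1 (H : Good τ θ) (a : ℂ) : FF θ w₁ w₂ b (a + 1) = FF θ w₁ w₂ b a := by
  unfold FF
  rw [show w₁ + w₂ - (a+1) - b = (w₁ + w₂ - a - b) - 1 by ring, H.per1' (w₁ + w₂ - a - b),
    show w₁ + w₂ - (a+1) = (w₁ + w₂ - a) - 1 by ring, H.per1' (w₁ + w₂ - a),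
    show a + 1 + b = (a + b) + 1 by ring, H.per1 (a+b),
    show w₂ - (a+1) - b = (w₂ - a - b) - 1 by ring, H.per1' (w₂ - a - b),
    show w₁ - (a+1) = (w₁ - a) - 1 by ring, H.per1' (w₁ - a),
    H.per1 a]
  ring

def EE (τ w₁ w₂ b : ℂ) : ℂ → ℂ := fun a =>
  Complex.exp (2 * (Real.pi : ℂ) * Complex.I * (w₁ + w₂ - 2*a - b - τ) - 2 * (Real.pi : ℂ) * Complex.I * τ + 2 * (Real.pi : ℂ) * Complex.I * τ)

lemma EE_eq (τ w₁ w₂ b a : ℂ) : EE τ w₁ w₂ b a =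
    Complex.exp (2 * (Real.pi : ℂ) * Complex.I * (w₁ + w₂ - 2*a - b - τ)) := by
  unfold EE; congr 1; ring

lemma EE_ne (τ w₁ w₂ b a : ℂ) : EE τ w₁ w₂ b a ≠ 0 := Complex.exp_ne_zero _

lemma FF_perτ (H : Good τ θ) (a : ℂ) : FF θ w₁ w₂ b (a + τ) = EE τ w₁ w₂ b a * FF θ w₁ w₂ b a := by
  unfold FF
  rw [EE_eq,
    show w₁ + w₂ - (a+τ) - b = (w₁ + w₂ - a - b) - τ by ring, H.per2' (w₁ + w₂ - a - b),
    show w₁ + w₂ - (a+τ) = (w₁ + w₂ - a) - τ by ring, H.per2' (w₁ + w₂ - a),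
    show a + τ + b = (a + b) + τ by ring, H.per2 (a+b),
    show w₂ - (a+τ) - b = (w₂ - a - b) - τ by ring, H.per2' (w₂ - a - b),
    show w₁ - (a+τ) = (w₁ - a) - τ by ring, H.per2' (w₁ - a),
    H.per2 a]
  have h1 : Complex.exp (-(Real.pi : ℂ) * Complex.I * τ + 2 * (Real.pi : ℂ) * Complex.I * (w₁ + w₂ - a)) *
      Complex.exp (-(Real.pi : ℂ) * Complex.I * τ - 2 * (Real.pi : ℂ) * Complex.I * (a + b)) =
      Complex.exp (2 * (Real.pi : ℂ) * Complex.I * (w₁ + w₂ - 2*a - b - τ)) := by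
    rw [← Complex.exp_add]; congr 1; ring
  have h2 : Complex.exp (-(Real.pi : ℂ) * Complex.I * τ + 2 * (Real.pi : ℂ) * Complex.I * (w₂ - a - b)) *
      Complex.exp (-(Real.pi : ℂ) * Complex.I * τ + 2 * (Real.pi : ℂ) * Complex.I * (w₁ - a)) =
      Complex.exp (2 * (Real.pi : ℂ) * Complex.I * (w₁ + w₂ - 2*a - b - τ)) := by
    rw [← Complex.exp_add]; congr 1; ring
  have h3 : Complex.exp (-(Real.pi : ℂ) * Complex.I * τ + 2 * (Real.pi : ℂ) * Complex.I * (w₁ + w₂ - a - b)) *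
      Complex.exp (-(Real.pi : ℂ) * Complex.I * τ - 2 * (Real.pi : ℂ) * Complex.I * a) =
      Complex.exp (2 * (Real.pi : ℂ) * Complex.I * (w₁ + w₂ - 2*a - b - τ)) := by
    rw [← Complex.exp_add]; congr 1; ring
  linear_combination (θ (w₁ + w₂ - a) * θ (a + b) * θ (w₂ - b) * θ w₁) * h1 -
    (θ (w₂ - a - b) * θ (w₁ - a) * θ (w₁ + w₂) * θ b) * h2 -
    (θ (w₁ + b) * θ (w₁ + w₂ - a - b) * θ w₂ * θ a) * h3

lemma DD_per1 (H : Good τ θ) (a : ℂ) : DD θ w₁ w₂ b (a + 1) = DD θ w₁ w₂ b a := by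
  unfold DD
  rw [show w₁ + w₂ - (a+1) = (w₁ + w₂ - a) - 1 by ring, H.per1' (w₁ + w₂ - a),
    show a + 1 + b = (a + b) + 1 by ring, H.per1 (a+b)]
  ring

lemma DD_perτ (H : Good τ θ) (a : ℂ) : DD θ w₁ w₂ b (a + τ) = EE τ w₁ w₂ b a * DD θ w₁ w₂ b a := by
  unfold DD
  rw [EE_eq,
    show w₁ + w₂ - (a+τ) = (w₁ + w₂ - a) - τ by ring, H.per2' (w₁ + w₂ - a),
    show a + τ + b = (a + b) + τ by ring, H.per2 (a+b)]
  have h1 : Complex.exp (-(Real.pi : ℂ) * Complex.I * τ + 2 * (Real.pi : ℂ) * Complex.I * (w₁ + w₂ - a)) *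
      Complex.exp (-(Real.pi : ℂ) * Complex.I * τ - 2 * (Real.pi : ℂ) * Complex.I * (a + b)) =
      Complex.exp (2 * (Real.pi : ℂ) * Complex.I * (w₁ + w₂ - 2*a - b - τ)) := by
    rw [← Complex.exp_add]; congr 1; ring
  linear_combination (θ (w₁ + w₂ - a) * θ (a + b)) * h1

lemma FF_zero0 (H : Good τ θ) : FF θ w₁ w₂ b 0 = 0 := by
  unfold FF
  rw [show w₁ + w₂ - 0 = w₁ + w₂ by ring, show (0:ℂ) + b = b by ring,
    show w₂ - 0 - b = w₂ - b by ring, show w₁ - 0 = w₁ by ring, H.zero0]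
  ring

lemma FF_zero_negb (H : Good τ θ) : FF θ w₁ w₂ b (-b) = 0 := by
  unfold FF
  rw [show -b + b = (0:ℂ) by ring, H.zero0,
    show w₂ - -b - b = w₂ by ring, show w₁ - -b = w₁ + b by ring,
    show w₁ + w₂ - -b - b = w₁ + w₂ by ring, H.odd b]
  ring

lemma FF_zero_w12 (H : Good τ θ) : FF θ w₁ w₂ b (w₁ + w₂) = 0 := by
  unfold FF
  rw [show w₁ + w₂ - (w₁ + w₂) - b = -b by ring, H.odd b,
    show w₁ + w₂ - (w₁ + w₂) = (0:ℂ) by ring, H.zero0,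
    show w₂ - (w₁ + w₂) - b = -(w₁ + b) by ring, H.odd (w₁ + b),
    show w₁ - (w₁ + w₂) = -w₂ by ring, H.odd w₂]
  ring

end FD

/-- shift a predicate by integer multiples -/
lemma predshift {P : ℂ → Prop} {c : ℂ} (h : ∀ y, P y → P (y + c)) (h' : ∀ y, P y → P (y - c)) :
    ∀ (n : ℤ) (y : ℂ), P y → P (y + n * c) := by
  intro n
  induction n using Int.induction_on with
  | zero => intro y hy; simpa using hy
  | succ k ih =>
    intro y hy
    have h2 := ih y hy
    push_cast at h2 ⊢
    have e : y + ((k : ℂ) + 1) * c = (y + (k : ℂ) * c) + c := by ring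
    rw [e]
    exact h _ h2
  | pred k ih =>
    intro y hy
    have h2 := ih y hy
    push_cast at h2 ⊢
    have e : y + (-(k : ℂ) - 1) * c = (y + -(k : ℂ) * c) - c := by ring
    rw [e]
    exact h' _ h2

lemma latshift {P : ℂ → Prop} {τ : ℂ}
    (h1 : ∀ y, P y → P (y + 1)) (h1' : ∀ y, P y → P (y - 1))
    (h2 : ∀ y, P y → P (y + τ)) (h2' : ∀ y, P y → P (y - τ)) :
    ∀ (m n : ℤ) (y : ℂ), P y → P (y + (m : ℂ) + (n : ℂ) * τ) := by
  intro m n y hy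
  have e : y + (m : ℂ) + (n : ℂ) * τ = (y + (m : ℂ) * 1) + (n : ℂ) * τ := by ring
  rw [e]
  exact predshift h2 h2' n _ (predshift (by simpa using h1) (by simpa using h1') m y hy)



section Key

variable {τ : ℂ} {θ : ℂ → ℂ}

lemma FF_lat_zero (H : Good τ θ) (w₁ w₂ b : ℂ) {x : ℂ} (hx : FF θ w₁ w₂ b x = 0)
    (m n : ℤ) : FF θ w₁ w₂ b (x + (m : ℂ) + (n : ℂ) * τ) = 0 := by
  refine latshift (τ := τ) (P := fun y => FF θ w₁ w₂ b y = 0) ?_ ?_ ?_ ?_ m n x hx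
  · intro y hy; rw [FF_per1 w₁ w₂ b H, hy]
  · intro y hy
    have h := FF_per1 w₁ w₂ b H (y - 1)
    rw [sub_add_cancel, hy] at h
    exact h.symm
  · intro y hy; rw [FF_perτ w₁ w₂ b H, hy, mul_zero]
  · intro y hy
    have h := FF_perτ w₁ w₂ b H (y - τ)
    rw [sub_add_cancel, hy] at h
    exact ((mul_eq_zero.1 h.symm).resolve_left (EE_ne τ w₁ w₂ b (y - τ)))

lemma key (hτ : 0 < τ.im) (H : Good τ θ) (w₁ w₂ b : ℂ)
    (hw12 : ¬ lat τ (w₁ + w₂)) (hb : ¬ lat τ b) (hb12 : ¬ lat τ (w₁ + w₂ + b)) :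
    ∀ a, FF θ w₁ w₂ b a = 0 := by
  set F := FF θ w₁ w₂ b with hF
  set D := DD θ w₁ w₂ b with hD
  have hFd : Differentiable ℂ F := FF_diff w₁ w₂ b H
  have hDd : Differentiable ℂ D := DD_diff w₁ w₂ b H
  set K : ℂ → ℂ := fun a => F a / D a with hK
  set Kt : ℂ → ℂ := fun z => limUnder (𝓝[≠] z) K with hKt
  have hDzero : ∀ a, D a = 0 ↔ (lat τ (w₁ + w₂ - a) ∨ lat τ (a + b)) := by
    intro a
    rw [hD]
    show θ (w₁ + w₂ - a) * θ (a + b) = 0 ↔ _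
    rw [mul_eq_zero, H.zero, H.zero]
  have hFper1 : ∀ a, F (a + 1) = F a := fun a => FF_per1 w₁ w₂ b H a
  have hFperτ : ∀ a, F (a + τ) = EE τ w₁ w₂ b a * F a := fun a => FF_perτ w₁ w₂ b H a
  have hDper1 : ∀ a, D (a + 1) = D a := fun a => DD_per1 w₁ w₂ b H a
  have hDperτ : ∀ a, D (a + τ) = EE τ w₁ w₂ b a * D a := fun a => DD_perτ w₁ w₂ b H a
  -- at bad points: F vanishes and D has nonzero derivative
  have hbad : ∀ c, D c = 0 → (F c = 0 ∧ ∃ d : ℂ, d ≠ 0 ∧ HasDerivAt D d c) := by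
    intro c hc
    have inner1 : HasDerivAt (fun a : ℂ => w₁ + w₂ - a) (-1) c := by
      simpa using (hasDerivAt_id c).const_sub (w₁ + w₂)
    have inner2 : HasDerivAt (fun a : ℂ => a + b) 1 c := (hasDerivAt_id c).add_const b
    have h01 : HasDerivAt θ (deriv θ (w₁ + w₂ - c)) (w₁ + w₂ - c) :=
      (H.diff (w₁ + w₂ - c)).hasDerivAt
    have h02 : HasDerivAt θ (deriv θ (c + b)) (c + b) := (H.diff (c + b)).hasDerivAt
    have hd1 : HasDerivAt (fun a => θ (w₁ + w₂ - a)) (deriv θ (w₁ + w₂ - c) * (-1)) c :=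
      HasDerivAt.comp c h01 inner1
    have hd2 : HasDerivAt (fun a => θ (a + b)) (deriv θ (c + b) * 1) c :=
      HasDerivAt.comp c h02 inner2
    have hDder : HasDerivAt D
        ((deriv θ (w₁ + w₂ - c) * (-1)) * θ (c + b) + θ (w₁ + w₂ - c) * (deriv θ (c + b) * 1)) c :=
      hd1.mul hd2
    rcases (hDzero c).1 hc with hcase | hcase
    · obtain ⟨m, n, e⟩ := hcase
      have hnb : ¬ lat τ (c + b) := by
        intro hl
        apply hb12
        have h2 := lat.add (⟨m, n, e⟩ : lat τ (w₁ + w₂ - c)) hl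
        rwa [show (w₁ + w₂ - c) + (c + b) = w₁ + w₂ + b by ring] at h2
      have hθ0 : θ (w₁ + w₂ - c) = 0 := (H.zero _).2 ⟨m, n, e⟩
      have hFc : F c = 0 := by
        have h3 := FF_lat_zero H w₁ w₂ b (FF_zero_w12 w₁ w₂ b H) (-m) (-n)
        have e2 : (w₁ + w₂) + ((-m : ℤ) : ℂ) + ((-n : ℤ) : ℂ) * τ = c := by
          push_cast
          linear_combination e
        rw [hF]
        rw [← e2]
        exact h3
      refine ⟨hFc, -(deriv θ (w₁ + w₂ - c) * θ (c + b)), ?_, ?_⟩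
      · refine neg_ne_zero.2 (mul_ne_zero ?_ (H.ne hnb))
        rw [e]; exact H.simple m n
      · convert hDder using 1
        rw [hθ0]; ring
    · obtain ⟨m, n, e⟩ := hcase
      have hnb : ¬ lat τ (w₁ + w₂ - c) := by
        intro hl
        apply hb12
        have h2 := lat.add hl (⟨m, n, e⟩ : lat τ (c + b))
        rwa [show (w₁ + w₂ - c) + (c + b) = w₁ + w₂ + b by ring] at h2
      have hθ0 : θ (c + b) = 0 := (H.zero _).2 ⟨m, n, e⟩
      have hFc : F c = 0 := by
        have h3 := FF_lat_zero H w₁ w₂ b (FF_zero_negb w₁ w₂ b H) m n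
        have e2 : (-b) + (m : ℂ) + (n : ℂ) * τ = c := by linear_combination -e
        rw [hF, ← e2]
        exact h3
      refine ⟨hFc, θ (w₁ + w₂ - c) * deriv θ (c + b), ?_, ?_⟩
      · refine mul_ne_zero (H.ne hnb) ?_
        rw [e]; exact H.simple m n
      · convert hDder using 1
        rw [hθ0]; ring
  -- K tends to a limit at bad points
  have hKtend : ∀ c, D c = 0 → ∃ L, Tendsto K (𝓝[≠] c) (𝓝 L) := by
    intro c hc
    obtain ⟨hFc, d, hd0, hdD⟩ := hbad c hc
    have hsF : Tendsto (slope F c) (𝓝[≠] c) (𝓝 (deriv F c)) :=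
      hasDerivAt_iff_tendsto_slope.1 (hFd c).hasDerivAt
    have hsD : Tendsto (slope D c) (𝓝[≠] c) (𝓝 d) :=
      hasDerivAt_iff_tendsto_slope.1 hdD
    refine ⟨deriv F c / d, ?_⟩
    have h := hsF.div hsD hd0
    have heq : (fun a => slope F c a / slope D c a) =ᶠ[𝓝[≠] c] K := by
      filter_upwards [self_mem_nhdsWithin] with a ha
      have hane : a ≠ c := ha
      have hac : a - c ≠ 0 := sub_ne_zero.2 hane
      simp only [slope_def_field, hFc, hc, sub_zero]
      show F a / (a - c) / (D a / (a - c)) = F a / D a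
      rcases eq_or_ne (D a) 0 with h0 | h0
      · rw [h0]; simp
      · field_simp
    exact h.congr' heq
  -- good points
  have hKgood : ∀ z, D z ≠ 0 → ContinuousAt K z ∧ Kt z = K z := by
    intro z hz
    have hcont : ContinuousAt K z := ((hFd z).continuousAt).div ((hDd z).continuousAt) hz
    refine ⟨hcont, ?_⟩
    exact (hcont.continuousWithinAt).limUnder_eq
  have hKtlim : ∀ c, Tendsto K (𝓝[≠] c) (𝓝 (Kt c)) := by
    intro c
    by_cases hc : D c = 0
    · obtain ⟨L, hL⟩ := hKtend c hc
      have : Kt c = L := hL.limUnder_eq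
      rw [this]; exact hL
    · rw [(hKgood c hc).2]
      exact (hKgood c hc).1.continuousWithinAt
  -- differentiability of Kt
  have hKtdiff : Differentiable ℂ Kt := by
    intro z
    by_cases hz : D z = 0
    · -- bad point
      have hev : ∀ᶠ a in 𝓝[≠] z, D a ≠ 0 := by
        obtain ⟨hFz, d, hd0, hdD⟩ := hbad z hz
        have hsD := hasDerivAt_iff_tendsto_slope.1 hdD
        filter_upwards [hsD.eventually_ne hd0, self_mem_nhdsWithin] with a ha hane
        intro h0
        apply ha
        rw [slope_def_field, h0, hz]
        simp
      obtain ⟨s, hsmem, hs⟩ := hev.exists_mem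
      have hs'mem : s ∩ {z}ᶜ ∈ 𝓝[≠] z := inter_mem hsmem self_mem_nhdsWithin
      have hd : DifferentiableOn ℂ K (s ∩ {z}ᶜ) := by
        intro a ha
        exact ((hFd a).div (hDd a) (hs a ha.1)).differentiableWithinAt
      have hbdd : IsBoundedUnder (· ≤ ·) (𝓝[≠] z) (norm ∘ fun a => K a - K z) := by
        have h1 : Tendsto (fun a => ‖K a - K z‖) (𝓝[≠] z) (𝓝 ‖Kt z - K z‖) :=
          ((hKtlim z).sub tendsto_const_nhds).norm
        exact h1.isBoundedUnder_le
      have ho : (fun a => K a - K z) =o[𝓝[≠] z] fun a => (a - z)⁻¹ :=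
        hbdd.isLittleO_sub_self_inv
      have hupd := Complex.differentiableOn_update_limUnder_insert_of_isLittleO hs'mem hd ho
      have hmem : insert z (s ∩ {z}ᶜ) ∈ 𝓝 z := insert_mem_nhds_iff.2 hs'mem
      have hDA : DifferentiableAt ℂ (Function.update K z (limUnder (𝓝[≠] z) K)) z :=
        hupd.differentiableAt hmem
      have heq : Kt =ᶠ[𝓝 z] Function.update K z (limUnder (𝓝[≠] z) K) := by
        filter_upwards [hmem] with a ha
        rcases eq_or_ne a z with rfl | hne
        · rw [Function.update_self]
        · rw [Function.update_of_ne hne]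
          exact (hKgood a (hs a ((ha.resolve_left hne).1))).2
      exact (heq.differentiableAt_iff).2 hDA
    · have hevs : ∀ᶠ a in 𝓝 z, D a ≠ 0 := (hDd z).continuousAt.eventually_ne hz
      have heq : Kt =ᶠ[𝓝 z] K := by
        filter_upwards [hevs] with a ha
        exact (hKgood a ha).2
      exact (heq.differentiableAt_iff).2 ((hFd z).div (hDd z) hz)
  have hKtcont : Continuous Kt := hKtdiff.continuous
  -- the set of good points is dense
  have hZc : {a : ℂ | D a = 0}.Countable := by
    have hsub : {a : ℂ | D a = 0} ⊆
        (fun l => w₁ + w₂ - l) '' {z | lat τ z} ∪ (fun l => l - b) '' {z | lat τ z} := by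
      intro a ha
      rcases (hDzero a).1 ha with h | h
      · exact Or.inl ⟨w₁ + w₂ - a, h, by ring⟩
      · exact Or.inr ⟨a + b, h, by ring⟩
    exact ((((lat_countable τ).image _)).union (((lat_countable τ).image _))).mono hsub
  have hdense : Dense {a : ℂ | D a ≠ 0} := by
    exact hZc.dense_compl ℂ
  -- periodicity of Kt
  have hper1 : ∀ z, Kt (z + 1) = Kt z := by
    have h1 : Continuous (fun z => Kt (z + 1)) := hKtcont.comp (continuous_id.add continuous_const)
    have heq := Continuous.ext_on hdense h1 hKtcont (fun a (ha : D a ≠ 0) => by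
      have ha1 : D (a + 1) ≠ 0 := by rw [hDper1]; exact ha
      show Kt (a + 1) = Kt a
      rw [(hKgood (a+1) ha1).2, (hKgood a ha).2]
      show F (a+1) / D (a+1) = F a / D a
      rw [hFper1, hDper1])
    exact fun z => congrFun heq z
  have hperτ : ∀ z, Kt (z + τ) = Kt z := by
    have h1 : Continuous (fun z => Kt (z + τ)) := hKtcont.comp (continuous_id.add continuous_const)
    have heq := Continuous.ext_on hdense h1 hKtcont (fun a (ha : D a ≠ 0) => by
      have ha1 : D (a + τ) ≠ 0 := by
        rw [hDperτ]
        exact mul_ne_zero (EE_ne τ w₁ w₂ b a) ha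
      show Kt (a + τ) = Kt a
      rw [(hKgood (a+τ) ha1).2, (hKgood a ha).2]
      show F (a+τ) / D (a+τ) = F a / D a
      rw [hFperτ, hDperτ, mul_div_mul_left _ _ (EE_ne τ w₁ w₂ b a)])
    exact fun z => congrFun heq z
  have hlatper : ∀ (m n : ℤ) (z : ℂ), Kt (z + (m : ℂ) + (n : ℂ) * τ) = Kt z := by
    intro m n z
    refine latshift (τ := τ) (P := fun y => Kt y = Kt z) ?_ ?_ ?_ ?_ m n z rfl
    · intro y hy; rw [hper1 y]; exact hy
    · intro y hy; rw [← hper1 (y - 1), sub_add_cancel]; exact hy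
    · intro y hy; rw [hperτ y]; exact hy
    · intro y hy; rw [← hperτ (y - τ), sub_add_cancel]; exact hy
  -- boundedness
  obtain ⟨C, hC⟩ := (isCompact_closedBall (0 : ℂ) (1 + ‖τ‖)).exists_bound_of_continuousOn
    hKtcont.continuousOn
  have hbound : ∀ z, ‖Kt z‖ ≤ C := by
    intro z
    have hτim : τ.im ≠ 0 := ne_of_gt hτ
    set y : ℝ := z.im / τ.im with hy
    set x : ℝ := z.re - y * τ.re with hx
    have hz : z = (x : ℂ) + (y : ℂ) * τ := by
      apply Complex.ext
      · simp [Complex.add_re, Complex.mul_re, Complex.ofReal_re, Complex.ofReal_im, hx]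
      · simp [Complex.add_im, Complex.mul_im, Complex.ofReal_re, Complex.ofReal_im, hy]
        field_simp
    have harg : z + ((-⌊x⌋ : ℤ) : ℂ) + ((-⌊y⌋ : ℤ) : ℂ) * τ =
        ((Int.fract x : ℝ) : ℂ) + ((Int.fract y : ℝ) : ℂ) * τ := by
      rw [hz]
      unfold Int.fract
      push_cast
      ring
    have hmem : z + ((-⌊x⌋ : ℤ) : ℂ) + ((-⌊y⌋ : ℤ) : ℂ) * τ ∈ Metric.closedBall (0 : ℂ) (1 + ‖τ‖) := by
      rw [Metric.mem_closedBall, dist_zero_right, harg]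
      have h1 : ‖((Int.fract x : ℝ) : ℂ)‖ ≤ 1 := by
        rw [Complex.norm_real, Real.norm_eq_abs, _root_.abs_of_nonneg (Int.fract_nonneg x)]
        exact le_of_lt (Int.fract_lt_one x)
      have h2 : ‖((Int.fract y : ℝ) : ℂ)‖ ≤ 1 := by
        rw [Complex.norm_real, Real.norm_eq_abs, _root_.abs_of_nonneg (Int.fract_nonneg y)]
        exact le_of_lt (Int.fract_lt_one y)
      calc ‖((Int.fract x : ℝ) : ℂ) + ((Int.fract y : ℝ) : ℂ) * τ‖
          ≤ ‖((Int.fract x : ℝ) : ℂ)‖ + ‖((Int.fract y : ℝ) : ℂ)‖ * ‖τ‖ := by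
            refine (norm_add_le _ _).trans ?_
            rw [norm_mul]
        _ ≤ 1 + 1 * ‖τ‖ := by
            gcongr
        _ = 1 + ‖τ‖ := by ring
    calc ‖Kt z‖ = ‖Kt (z + ((-⌊x⌋ : ℤ) : ℂ) + ((-⌊y⌋ : ℤ) : ℂ) * τ)‖ := by rw [hlatper]
      _ ≤ C := hC _ hmem
  have hrange : IsBounded (Set.range Kt) := by
    rw [isBounded_iff_forall_norm_le]
    exact ⟨C, by rintro _ ⟨z, rfl⟩; exact hbound z⟩
  have hconst : ∀ z, Kt z = Kt 0 := fun z => hKtdiff.apply_eq_apply_of_bounded hrange z 0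
  have hD0 : D 0 ≠ 0 := by
    rw [hD]
    show θ (w₁ + w₂ - 0) * θ (0 + b) ≠ 0
    rw [show w₁ + w₂ - (0:ℂ) = w₁ + w₂ by ring, show (0:ℂ) + b = b by ring]
    exact mul_ne_zero (H.ne hw12) (H.ne hb)
  have hKt0 : Kt 0 = 0 := by
    rw [(hKgood 0 hD0).2]
    show F 0 / D 0 = 0
    rw [hF]
    rw [FF_zero0 w₁ w₂ b H]
    simp
  have hFgood : ∀ a, D a ≠ 0 → F a = 0 := by
    intro a ha
    have hKa : K a = 0 := by
      rw [← (hKgood a ha).2, hconst a, hKt0]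
    have : F a / D a = 0 := hKa
    exact (div_eq_zero_iff.1 this).resolve_right ha
  intro a
  have heq := Continuous.ext_on hdense hFd.continuous continuous_const
    (fun a (ha : D a ≠ 0) => hFgood a ha)
  exact congrFun heq a

lemma key2 (hτ : 0 < τ.im) (H : Good τ θ) (w₁ w₂ : ℂ) (hw12 : ¬ lat τ (w₁ + w₂)) :
    ∀ a b, FF θ w₁ w₂ b a = 0 := by
  intro a b
  have hθc : Continuous θ := H.diff.continuous
  have hGcont : Continuous (fun b => FF θ w₁ w₂ b a) := by
    unfold FF
    fun_prop
  have hcnt : {b : ℂ | lat τ b ∨ lat τ (w₁ + w₂ + b)}.Countable := by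
    have hsub : {b : ℂ | lat τ b ∨ lat τ (w₁ + w₂ + b)} ⊆
        {z | lat τ z} ∪ (fun l => l - (w₁ + w₂)) '' {z | lat τ z} := by
      intro c hc
      rcases hc with h | h
      · exact Or.inl h
      · exact Or.inr ⟨w₁ + w₂ + c, h, by ring⟩
    exact ((lat_countable τ).union ((lat_countable τ).image _)).mono hsub
  have hdense : Dense {b : ℂ | lat τ b ∨ lat τ (w₁ + w₂ + b)}ᶜ := hcnt.dense_compl ℂ
  have heq := Continuous.ext_on hdense hGcont continuous_const (fun c hc => by
    rw [Set.mem_compl_iff, Set.mem_setOf_eq, not_or] at hc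
    exact key hτ H w₁ w₂ c hw12 hc.1 hc.2 a)
  exact congrFun heq b

end Key

end SigmaAux


open SigmaAux in
/-- The three-term functional identity for the functions
`σ_w(t) = θ(w-t) θ'(0) / (θ(w) θ(t))`:
`σ_{w₁+w₂}(t-u) σ_{w₂}(s-t) - σ_{w₂}(s-u) σ_{w₁}(t-u) + σ_{w₁}(t-s) σ_{w₁+w₂}(s-u) = 0`,
where `θ` is the first Jacobi theta function at a fixed modular parameter `τ` in the
upper half plane: it is entire, odd, satisfies the quasi-periodicities
`θ(z+1) = -θ(z)`, `θ(z+τ) = -e^{-πiτ-2πiz}θ(z)`, its zero set is exactly the lattice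
`ℤ + ℤτ` and all of its zeros are simple.  The parameters `w₁, w₂, w₁+w₂` are assumed
to lie outside the lattice and the differences `t-u, s-t, t-s, s-u` as well, so that
all the factors are defined (the denominators are nonzero). -/
theorem sigma_three_term_identity (τ : ℂ) (hτ : 0 < τ.im) (θ : ℂ → ℂ)
    (hθ : Differentiable ℂ θ)
    (hθ1 : ∀ z, θ (z + 1) = -θ z)
    (hθ2 : ∀ z, θ (z + τ) =
      -Complex.exp (-(Real.pi : ℂ) * Complex.I * τ - 2 * (Real.pi : ℂ) * Complex.I * z) * θ z)
    (hodd : ∀ z, θ (-z) = -θ z)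
    (hzero : ∀ z, θ z = 0 ↔ ∃ m n : ℤ, z = (m : ℂ) + (n : ℂ) * τ)
    (hsimple : ∀ m n : ℤ, deriv θ ((m : ℂ) + (n : ℂ) * τ) ≠ 0)
    (w₁ w₂ : ℂ)
    (hw₁ : ¬∃ m n : ℤ, w₁ = (m : ℂ) + (n : ℂ) * τ)
    (hw₂ : ¬∃ m n : ℤ, w₂ = (m : ℂ) + (n : ℂ) * τ)
    (hw₁₂ : ¬∃ m n : ℤ, w₁ + w₂ = (m : ℂ) + (n : ℂ) * τ)
    (t s u : ℂ)
    (htu : ¬∃ m n : ℤ, t - u = (m : ℂ) + (n : ℂ) * τ)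
    (hst : ¬∃ m n : ℤ, s - t = (m : ℂ) + (n : ℂ) * τ)
    (hts : ¬∃ m n : ℤ, t - s = (m : ℂ) + (n : ℂ) * τ)
    (hsu : ¬∃ m n : ℤ, s - u = (m : ℂ) + (n : ℂ) * τ) :
    (fun w x => θ (w - x) * deriv θ 0 / (θ w * θ x)) (w₁ + w₂) (t - u) *
        (fun w x => θ (w - x) * deriv θ 0 / (θ w * θ x)) w₂ (s - t) -
      (fun w x => θ (w - x) * deriv θ 0 / (θ w * θ x)) w₂ (s - u) *
        (fun w x => θ (w - x) * deriv θ 0 / (θ w * θ x)) w₁ (t - u) +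
      (fun w x => θ (w - x) * deriv θ 0 / (θ w * θ x)) w₁ (t - s) *
        (fun w x => θ (w - x) * deriv θ 0 / (θ w * θ x)) (w₁ + w₂) (s - u) = 0 := by
  have H : Good τ θ := ⟨hθ, hθ1, hθ2, hodd, hzero, hsimple⟩
  have h := key2 hτ H w₁ w₂ hw₁₂ (t - u) (s - t)
  unfold FF at h
  rw [show (t - u) + (s - t) = s - u by ring,
    show w₂ - (t - u) - (s - t) = w₂ - (s - u) by ring,
    show w₁ + w₂ - (t - u) - (s - t) = w₁ + w₂ - (s - u) by ring] at h
  have hodd' : θ (t - s) = -θ (s - t) := by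
    rw [show t - s = -(s - t) by ring, hodd]
  have hA : θ (w₁ + w₂) ≠ 0 := H.ne hw₁₂
  have hB : θ w₁ ≠ 0 := H.ne hw₁
  have hC : θ w₂ ≠ 0 := H.ne hw₂
  have hP : θ (t - u) ≠ 0 := H.ne htu
  have hQ : θ (s - t) ≠ 0 := H.ne hst
  have hR : θ (s - u) ≠ 0 := H.ne hsu
  beta_reduce
  rw [hodd', show w₁ - (t - s) = w₁ + (s - t) by ring]
  field_simp
  linear_combination ((deriv θ 0)^2) * h
end
end

section
/- Let f : C -> C be holomorphic on C minus ((u + L) union (s + L)) where L = Z + Z*tau, with at most simple poles at points of (u + L) union (s + L), satisfying f(t+1) = f(t), f(t+tau) = exp(2*pi*i*w)*f(t) with w not in L, and with residue 0 at t = u and at t = s. Then f is identically 0. -/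
open Complex Filter Topology MeasureTheory AddCircle

lemma lemE (h : ℝ → ℂ) (hc : Continuous h) (hp : Function.Periodic h 1)
    (hz : ∀ n : ℤ, ∫ x in (0:ℝ)..1, Complex.exp (2 * Real.pi * I * (-n) * x / 1) * h x = 0) :
    ∀ x : ℝ, h x = 0 := by
  haveI : Fact ((0:ℝ) < 1) := ⟨one_pos⟩
  set G : AddCircle (1:ℝ) → ℂ := hp.lift with hG
  have hGc : Continuous G := hc.quotient_liftOn' _
  have hcoeff : ∀ n : ℤ, fourierCoeff G n = 0 := by
    intro n
    rw [fourierCoeff_eq_intervalIntegral G n 0]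
    rw [show ((1:ℝ)/1) = 1 by norm_num, one_smul, zero_add, ← hz n]
    apply intervalIntegral.integral_congr
    intro x _
    simp only [smul_eq_mul, fourier_coe_apply, hG, Function.Periodic.lift_coe]
    push_cast
    ring_nf
  -- move to L²
  set Gc : C(AddCircle (1:ℝ), ℂ) := ⟨G, hGc⟩ with hGcdef
  set gL : Lp ℂ 2 (@AddCircle.haarAddCircle 1 _) := ContinuousMap.toLp (E := ℂ) 2 haarAddCircle ℂ Gc with hgl
  have hae : (gL : AddCircle (1:ℝ) → ℂ) =ᵐ[(haarAddCircle : Measure (AddCircle (1:ℝ)))] G :=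
    ContinuousMap.coeFn_toLp (p := 2) (𝕜 := ℂ) haarAddCircle Gc
  have hrepr : ∀ n : ℤ, fourierBasis.repr gL n = 0 := by
    intro n
    rw [fourierBasis_repr, ← hcoeff n]
    unfold fourierCoeff
    apply integral_congr_ae
    filter_upwards [hae] with t ht
    rw [ht]
  have hr0 : fourierBasis.repr gL = 0 := by
    ext n
    simpa using hrepr n
  have hgL0 : gL = 0 := by
    apply fourierBasis.repr.injective
    simp [hr0]
  have hGc0 : Gc = 0 := by
    have := map_zero (ContinuousMap.toLp (E := ℂ) 2 (haarAddCircle : Measure (AddCircle (1:ℝ))) ℂ)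
    exact ContinuousMap.toLp_injective haarAddCircle (by rw [← hgl, hgL0, this])
  intro x
  have : G ↑(x : ℝ) = 0 := by rw [show G = ⇑Gc from rfl, hGc0]; rfl
  rwa [hG, Function.Periodic.lift_coe] at this

lemma lat_finite (τ u s : ℂ) (hτ : 0 < τ.im) (S : Set ℂ)
    (hS : S = {z : ℂ | ∃ m n : ℤ, z = u + (m : ℂ) + (n : ℂ) * τ ∨
      z = s + (m : ℂ) + (n : ℂ) * τ}) (R : ℝ) :
    (S ∩ Metric.closedBall 0 R).Finite := by
  rcases lt_or_ge R 0 with hR | hR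
  · rw [Metric.closedBall_eq_empty.mpr hR, Set.inter_empty]; exact Set.finite_empty
  set B : ℝ := (R + |u.im| + |s.im|) / τ.im with hB
  set C : ℝ := R + |u.re| + |s.re| + |B| * |τ.re| with hC
  set A : ℤ := ⌈|B| + |C|⌉ with hA
  have hBA : B ≤ (A : ℝ) := le_trans (le_trans (le_abs_self B)
    (by linarith [abs_nonneg C] : |B| ≤ |B| + |C|)) (Int.le_ceil _)
  have hCA : C ≤ (A : ℝ) := le_trans (le_trans (le_abs_self C)
    (by linarith [abs_nonneg B] : |C| ≤ |B| + |C|)) (Int.le_ceil _)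
  have key : (S ∩ Metric.closedBall 0 R) ⊆
      (fun p : (ℤ × ℤ) × Bool => (if p.2 then u else s) + (p.1.1 : ℂ) + (p.1.2 : ℂ) * τ) ''
        ((Set.Icc (-A) A ×ˢ Set.Icc (-A) A) ×ˢ (Set.univ : Set Bool)) := by
    rintro z ⟨hzS, hzB⟩
    rw [hS] at hzS
    obtain ⟨m, n, hz⟩ := hzS
    have hzn : ‖z‖ ≤ R := by
      rwa [Metric.mem_closedBall, dist_zero_right] at hzB
    have main : ∀ b : ℂ, |b.im| ≤ |u.im| + |s.im| → |b.re| ≤ |u.re| + |s.re| →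
        z = b + (m : ℂ) + (n : ℂ) * τ → m ∈ Set.Icc (-A) A ∧ n ∈ Set.Icc (-A) A := by
      intro b hbim hbre hzb
      have him : z.im = b.im + (n : ℝ) * τ.im := by
        rw [hzb]; simp
      have hre : z.re = b.re + (m : ℝ) + (n : ℝ) * τ.re := by
        rw [hzb]; simp
      have hzim : |z.im| ≤ R := le_trans (Complex.abs_im_le_norm z) hzn
      have hzre : |z.re| ≤ R := le_trans (Complex.abs_re_le_norm z) hzn
      have hnB : |(n : ℝ)| ≤ B := by
        have h1 : |(n : ℝ)| * τ.im = |(n : ℝ) * τ.im| := by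
          rw [abs_mul, abs_of_pos hτ]
        have h2 : |(n : ℝ) * τ.im| ≤ R + |u.im| + |s.im| := by
          have : (n : ℝ) * τ.im = z.im - b.im := by linarith
          rw [this]
          calc |z.im - b.im| ≤ |z.im| + |b.im| := abs_sub _ _
            _ ≤ R + (|u.im| + |s.im|) := add_le_add hzim hbim
            _ = R + |u.im| + |s.im| := by ring
        rw [hB, le_div_iff₀ hτ]
        rw [h1]; exact h2
      have hnabs : |(n : ℝ)| ≤ (A : ℝ) := le_trans hnB hBA
      have hmC : |(m : ℝ)| ≤ C := by
        have : (m : ℝ) = z.re - b.re - (n : ℝ) * τ.re := by linarith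
        rw [this, hC]
        have h3 : |(n : ℝ) * τ.re| ≤ |B| * |τ.re| := by
          rw [abs_mul]
          exact mul_le_mul_of_nonneg_right (le_trans hnB (le_abs_self B)) (abs_nonneg _)
        calc |z.re - b.re - (n:ℝ) * τ.re| ≤ |z.re - b.re| + |(n:ℝ) * τ.re| := abs_sub _ _
          _ ≤ (|z.re| + |b.re|) + |B| * |τ.re| := add_le_add (abs_sub _ _) h3
          _ ≤ (R + (|u.re| + |s.re|)) + |B| * |τ.re| := by
              gcongr
          _ = R + |u.re| + |s.re| + |B| * |τ.re| := by ring
      have hmabs : |(m : ℝ)| ≤ (A : ℝ) := le_trans hmC hCA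
      constructor
      · rw [Set.mem_Icc]
        constructor
        · exact_mod_cast neg_le_of_abs_le hmabs
        · exact_mod_cast le_of_abs_le hmabs
      · rw [Set.mem_Icc]
        constructor
        · exact_mod_cast neg_le_of_abs_le hnabs
        · exact_mod_cast le_of_abs_le hnabs
    rcases hz with hz | hz
    · obtain ⟨hm, hn⟩ := main u (by linarith [abs_nonneg s.im, le_refl |u.im|]) (by linarith [abs_nonneg s.re]) hz
      exact ⟨⟨⟨m, n⟩, true⟩, ⟨⟨hm, hn⟩, trivial⟩, by simp [hz]⟩
    · obtain ⟨hm, hn⟩ := main s (by linarith [abs_nonneg u.im]) (by linarith [abs_nonneg u.re]) hz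
      exact ⟨⟨⟨m, n⟩, false⟩, ⟨⟨hm, hn⟩, trivial⟩, by simp [hz]⟩
  exact Set.Finite.subset ((((Set.finite_Icc (-A) A).prod (Set.finite_Icc (-A) A)).prod
    Set.finite_univ).image _) key

lemma S_closed (τ u s : ℂ) (hτ : 0 < τ.im) (S : Set ℂ)
    (hS : S = {z : ℂ | ∃ m n : ℤ, z = u + (m : ℂ) + (n : ℂ) * τ ∨
      z = s + (m : ℂ) + (n : ℂ) * τ}) : IsClosed S := by
  rw [← isOpen_compl_iff, Metric.isOpen_iff]
  intro x hx
  have hT : (S ∩ Metric.closedBall 0 (‖x‖ + 1)).Finite := lat_finite τ u s hτ S hS _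
  have hTc : IsClosed (S ∩ Metric.closedBall 0 (‖x‖ + 1)) := hT.isClosed
  have hxT : x ∈ (S ∩ Metric.closedBall 0 (‖x‖ + 1))ᶜ := fun h => hx h.1
  obtain ⟨r1, hr1, hball⟩ := Metric.isOpen_iff.mp hTc.isOpen_compl x hxT
  refine ⟨min r1 1, lt_min hr1 one_pos, fun z hz => ?_⟩
  intro hzS
  have hz1 : dist z x < 1 := lt_of_lt_of_le hz (min_le_right _ _)
  have hzr1 : dist z x < r1 := lt_of_lt_of_le hz (min_le_left _ _)
  have : z ∈ Metric.closedBall 0 (‖x‖ + 1) := by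
    rw [Metric.mem_closedBall, dist_zero_right]
    calc ‖z‖ = dist z 0 := (dist_zero_right z).symm
      _ ≤ dist z x + dist x 0 := dist_triangle _ _ _
      _ ≤ 1 + ‖x‖ := by rw [dist_zero_right]; linarith
      _ = ‖x‖ + 1 := by ring
  exact hball hzr1 ⟨hzS, this⟩

lemma S_isolated (τ u s : ℂ) (hτ : 0 < τ.im) (S : Set ℂ)
    (hS : S = {z : ℂ | ∃ m n : ℤ, z = u + (m : ℂ) + (n : ℂ) * τ ∨
      z = s + (m : ℂ) + (n : ℂ) * τ}) :
    ∀ p ∈ S, ∃ r > 0, ∀ z ∈ Metric.ball p r, z ≠ p → z ∈ Sᶜ := by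
  intro p hp
  have hT : ((S ∩ Metric.closedBall 0 (‖p‖ + 1)) \ {p}).Finite :=
    (lat_finite τ u s hτ S hS _).diff
  have hpT : p ∈ ((S ∩ Metric.closedBall 0 (‖p‖ + 1)) \ {p})ᶜ := fun h => h.2 rfl
  obtain ⟨r1, hr1, hball⟩ := Metric.isOpen_iff.mp hT.isClosed.isOpen_compl p hpT
  refine ⟨min r1 1, lt_min hr1 one_pos, fun z hz hzp => ?_⟩
  intro hzS
  have hz1 : dist z p < 1 := lt_of_lt_of_le hz (min_le_right _ _)
  have hzr1 : dist z p < r1 := lt_of_lt_of_le hz (min_le_left _ _)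
  have hzb : z ∈ Metric.closedBall 0 (‖p‖ + 1) := by
    rw [Metric.mem_closedBall, dist_zero_right]
    calc ‖z‖ = dist z 0 := (dist_zero_right z).symm
      _ ≤ dist z p + dist p 0 := dist_triangle _ _ _
      _ ≤ 1 + ‖p‖ := by rw [dist_zero_right]; linarith
      _ = ‖p‖ + 1 := by ring
  exact hball hzr1 ⟨⟨hzS, hzb⟩, hzp⟩

lemma S_countable (τ u s : ℂ) (S : Set ℂ)
    (hS : S = {z : ℂ | ∃ m n : ℤ, z = u + (m : ℂ) + (n : ℂ) * τ ∨
      z = s + (m : ℂ) + (n : ℂ) * τ}) : S.Countable := by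
  have : S ⊆ Set.range (fun p : (ℤ × ℤ) × Bool =>
      (if p.2 then u else s) + (p.1.1 : ℂ) + (p.1.2 : ℂ) * τ) := by
    rw [hS]
    rintro z ⟨m, n, hz | hz⟩
    · exact ⟨⟨⟨m, n⟩, true⟩, by simp [hz]⟩
    · exact ⟨⟨⟨m, n⟩, false⟩, by simp [hz]⟩
  exact (Set.countable_range _).mono this

lemma lemD (τ w : ℂ) (hτ : 0 < τ.im)
    (hw : ¬∃ m n : ℤ, w = (m : ℂ) + (n : ℂ) * τ)
    (g : ℂ → ℂ) (hg : Differentiable ℂ g)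
    (hp1 : ∀ t : ℂ, g (t + 1) = g t)
    (hp2 : ∀ t : ℂ, g (t + τ) = Complex.exp (2 * (Real.pi : ℂ) * I * w) * g t) :
    ∀ x : ℝ, g x = 0 := by
  have main : ∀ n : ℤ, ∫ x in (0:ℝ)..1, Complex.exp (2 * Real.pi * I * (-n) * x / 1) * g x = 0 := by
    intro n
    set c₀ : ℂ := 2 * Real.pi * I * (-n) with hc₀
    set G : ℂ → ℂ := fun t => g t * Complex.exp (c₀ * t) with hG
    have hGd : Differentiable ℂ G :=
      hg.mul (Complex.differentiable_exp.comp ((differentiable_const c₀).mul differentiable_id))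
    have hexpc₀ : Complex.exp c₀ = 1 := by
      rw [show c₀ = ((-n : ℤ) : ℂ) * (2 * Real.pi * I) by push_cast [hc₀]; ring]
      exact Complex.exp_int_mul_two_pi_mul_I (-n)
    have hGper : ∀ t : ℂ, G (t + 1) = G t := by
      intro t
      simp only [hG]
      rw [hp1, mul_add, Complex.exp_add, mul_one, hexpc₀, mul_one]
    set e : ℂ := Complex.exp (2 * (Real.pi : ℂ) * I * w) * Complex.exp (c₀ * τ) with he
    have hGτ : ∀ t : ℂ, G (t + τ) = e * G t := by
      intro t
      simp only [hG]
      rw [hp2, mul_add, Complex.exp_add, he]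
      ring
    -- rectangle
    have hrect := Complex.integral_boundary_rect_eq_zero_of_differentiableOn G 0
      (⟨1, τ.im⟩ : ℂ) (hGd.differentiableOn)
    simp only [Complex.zero_re, Complex.zero_im, Complex.ofReal_zero, Complex.ofReal_one, zero_mul, add_zero, zero_add] at hrect
    have hvert : ∀ y : ℝ, G (1 + (y:ℂ) * I) = G ((y:ℂ) * I) := by
      intro y
      rw [show (1 : ℂ) + (y:ℂ) * I = ((y : ℂ) * I) + 1 by ring, hGper]
    simp only [hvert] at hrect
    have hrect2 : (∫ x : ℝ in (0:ℝ)..1, G x) =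
        ∫ x : ℝ in (0:ℝ)..1, G (x + τ.im * I) := by
      linear_combination hrect
    set h : ℝ → ℂ := fun x => G x with hh
    have hhper : Function.Periodic h 1 := by
      intro x
      simp only [hh]
      push_cast
      exact hGper x
    have hleft : (∫ x : ℝ in (0:ℝ)..1, G x) = ∫ x in (0:ℝ)..1, h x := rfl
    have hshift : ∀ x : ℝ, G (x + τ.im * I) = e * h (x - τ.re) := by
      intro x
      have hxeq : (x : ℂ) + τ.im * I = ((x - τ.re : ℝ) : ℂ) + τ := by
        apply Complex.ext
        · simp
        · simp
      rw [hxeq, hGτ]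
    have hright : (∫ x : ℝ in (0:ℝ)..1, G (x + τ.im * I)) = e * ∫ x in (0:ℝ)..1, h x := by
      rw [intervalIntegral.integral_congr (g := fun x => e * h (x - τ.re))
        (fun x _ => hshift x), intervalIntegral.integral_const_mul]
      congr 1
      rw [intervalIntegral.integral_comp_sub_right h τ.re]
      have := hhper.intervalIntegral_add_eq (0 - τ.re) 0
      rw [show (0:ℝ) - τ.re + 1 = 1 - τ.re by ring, show (0:ℝ) + 1 = 1 by ring] at this
      exact this
    have he1 : e ≠ 1 := by
      intro hcon
      rw [he, ← Complex.exp_add] at hcon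
      obtain ⟨k, hk⟩ := Complex.exp_eq_one_iff.mp hcon
      apply hw
      refine ⟨k, n, ?_⟩
      have h2pi : (2 * (Real.pi : ℂ) * I) ≠ 0 := by
        simp [Real.pi_ne_zero, Complex.I_ne_zero]
      have : 2 * (Real.pi : ℂ) * I * w + c₀ * τ = 2 * (Real.pi : ℂ) * I * (w - n * τ) := by
        rw [hc₀]; push_cast; ring
      rw [this] at hk
      have hk2 : 2 * (Real.pi : ℂ) * I * (w - n * τ) = 2 * (Real.pi : ℂ) * I * k := by
        rw [hk]; ring
      have hcan := mul_left_cancel₀ h2pi hk2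
      rw [sub_eq_iff_eq_add] at hcan
      exact hcan
    have hI0 : (∫ x in (0:ℝ)..1, h x) = 0 := by
      have : (∫ x in (0:ℝ)..1, h x) = e * ∫ x in (0:ℝ)..1, h x := by
        rw [← hright, ← hleft, hrect2]
      have h2 : (1 - e) * ∫ x in (0:ℝ)..1, h x = 0 := by
        rw [sub_mul, one_mul]
        linear_combination this
      rcases mul_eq_zero.mp h2 with h3 | h3
      · exact absurd (by linear_combination -h3 : e = 1) he1
      · exact h3
    rw [← hI0]
    apply intervalIntegral.integral_congr
    intro x _
    simp only [hh, hG, hc₀, div_one]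
    push_cast
    ring_nf
  have hcont : Continuous (fun x : ℝ => g x) :=
    hg.continuous.comp Complex.continuous_ofReal
  have hper : Function.Periodic (fun x : ℝ => g x) 1 := by
    intro x
    push_cast
    exact hp1 x
  exact lemE _ hcont hper main

lemma lemF (g : ℂ → ℂ) (hg : Differentiable ℂ g) (h0 : ∀ x : ℝ, g x = 0) :
    ∀ z : ℂ, g z = 0 := by
  have hA : AnalyticOnNhd ℂ g Set.univ :=
    hg.differentiableOn.analyticOnNhd isOpen_univ
  have hseq : Tendsto (fun k : ℕ => ((1 / (k + 1) : ℝ) : ℂ)) atTop (𝓝[≠] (0:ℂ)) := by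
    rw [tendsto_nhdsWithin_iff]
    constructor
    · have := tendsto_one_div_add_atTop_nhds_zero_nat (𝕜 := ℝ)
      have h2 := (Complex.continuous_ofReal.tendsto 0).comp this
      simpa [Function.comp_def, one_div] using h2
    · filter_upwards with k
      simp only [Set.mem_compl_iff, Set.mem_singleton_iff]
      intro hcon
      have : (1 / ((k:ℝ) + 1) : ℝ) = 0 := by exact_mod_cast hcon
      have hpos : (0:ℝ) < 1 / ((k:ℝ) + 1) := by positivity
      linarith
  have hfreq : ∃ᶠ z in 𝓝[≠] (0:ℂ), g z = 0 :=
    hseq.frequently (Frequently.of_forall fun k => h0 _)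
  have := hA.eqOn_zero_of_preconnected_of_frequently_eq_zero isPreconnected_univ
    (Set.mem_univ 0) hfreq
  intro z
  exact this (Set.mem_univ z)

lemma extension_lemma (S : Set ℂ) (hSc : IsClosed S)
    (hiso : ∀ p ∈ S, ∃ r > 0, ∀ z ∈ Metric.ball p r, z ≠ p → z ∈ Sᶜ)
    (f : ℂ → ℂ) (hf : DifferentiableOn ℂ f Sᶜ)
    (hext : ∀ p ∈ S, ∃ c : ℂ, Tendsto f (𝓝[Sᶜ] p) (𝓝 c)) :
    ∃ g : ℂ → ℂ, Differentiable ℂ g ∧ Set.EqOn g f Sᶜ := by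
  classical
  set g : ℂ → ℂ := fun z => if z ∈ S then limUnder (𝓝[Sᶜ] z) f else f z with hg
  have heq : Set.EqOn g f Sᶜ := fun z hz => if_neg hz
  have hg1 : ∀ z ∈ Sᶜ, DifferentiableAt ℂ g z := by
    intro z hz
    have hnb : Sᶜ ∈ 𝓝 z := hSc.isOpen_compl.mem_nhds hz
    have hfz : DifferentiableAt ℂ f z := (hf z hz).differentiableAt hnb
    exact hfz.congr_of_eventuallyEq (eventually_of_mem hnb fun w hw => heq hw)
  refine ⟨g, fun p => ?_, heq⟩
  by_cases hp : p ∈ S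
  · obtain ⟨r, hr, hrS⟩ := hiso p hp
    obtain ⟨c, hc⟩ := hext p hp
    have hkey : 𝓝[Sᶜ] p = 𝓝[≠] p := by
      rw [nhdsWithin_restrict' (Sᶜ) (Metric.ball_mem_nhds p hr),
          nhdsWithin_restrict' ({p}ᶜ) (Metric.ball_mem_nhds p hr)]
      congr 1
      ext z
      constructor
      · rintro ⟨hz1, hz2⟩
        exact ⟨fun h => hz1 (h ▸ hp), hz2⟩
      · rintro ⟨hz1, hz2⟩
        exact ⟨hrS z hz2 hz1, hz2⟩
    rw [hkey] at hc
    have hgp : g p = c := by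
      have : limUnder (𝓝[Sᶜ] p) f = c := by
        rw [hkey]
        exact hc.limUnder_eq
      simp only [hg, if_pos hp, this]
    have hev : ∀ᶠ z in 𝓝[≠] p, g z = f z := by
      filter_upwards [mem_nhdsWithin_of_mem_nhds (Metric.ball_mem_nhds p hr),
        self_mem_nhdsWithin] with z hz1 hz2
      exact heq (hrS z hz1 hz2)
    have hgc : Tendsto g (𝓝[≠] p) (𝓝 (g p)) := by
      rw [hgp]
      exact hc.congr' (hev.mono fun z h => h.symm)
    have hcont : ContinuousAt g p := continuousWithinAt_compl_self.mp hgc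
    have hd : ∀ᶠ z in 𝓝[≠] p, DifferentiableAt ℂ g z := by
      filter_upwards [mem_nhdsWithin_of_mem_nhds (Metric.ball_mem_nhds p hr),
        self_mem_nhdsWithin] with z hz1 hz2
      exact hg1 z (hrS z hz1 hz2)
    exact (Complex.analyticAt_of_differentiable_on_punctured_nhds_of_continuousAt
      hd hcont).differentiableAt
  · exact hg1 p hp


/-- Let `L = ℤ + ℤτ` (`Im τ > 0`), `u, s` with `u - s ∉ L`, and `w ∉ L`.  If
`f : ℂ → ℂ` is holomorphic on the complement `Sᶜ` of `S = (u + L) ∪ (s + L)`, has at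
most simple poles with vanishing residue at the points of `S` (equivalently, it has a
finite limit along `Sᶜ` at each point of `S`), satisfies `f(t+1) = f(t)` and
`f(t+τ) = e^{2πiw} f(t)` on `Sᶜ`, then `f` vanishes identically on `Sᶜ`. -/
theorem quasiperiodic_zero_residues_eq_zero (τ u s w : ℂ) (hτ : 0 < τ.im)
    (hus : ¬∃ m n : ℤ, u - s = (m : ℂ) + (n : ℂ) * τ)
    (hw : ¬∃ m n : ℤ, w = (m : ℂ) + (n : ℂ) * τ)
    (S : Set ℂ)
    (hS : S = {z : ℂ | ∃ m n : ℤ, z = u + (m : ℂ) + (n : ℂ) * τ ∨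
      z = s + (m : ℂ) + (n : ℂ) * τ})
    (f : ℂ → ℂ)
    (hf : DifferentiableOn ℂ f Sᶜ)
    (hext : ∀ p ∈ S, ∃ c : ℂ, Tendsto f (𝓝[Sᶜ] p) (𝓝 c))
    (h1 : ∀ t ∈ Sᶜ, f (t + 1) = f t)
    (h2 : ∀ t ∈ Sᶜ, f (t + τ) = Complex.exp (2 * (Real.pi : ℂ) * Complex.I * w) * f t) :
    ∀ t ∈ Sᶜ, f t = 0 := by
  obtain ⟨g, hgd, hgeq⟩ := extension_lemma S (S_closed τ u s hτ S hS)
    (S_isolated τ u s hτ S hS) f hf hext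
  have hdense : Dense Sᶜ := (S_countable τ u s S hS).dense_compl ℂ
  have hshift1 : ∀ z : ℂ, z ∈ Sᶜ → z + 1 ∈ Sᶜ := by
    intro z hz hmem
    apply hz
    rw [hS] at hmem ⊢
    obtain ⟨m, n, h | h⟩ := hmem
    · exact ⟨m - 1, n, Or.inl (by push_cast; linear_combination h)⟩
    · exact ⟨m - 1, n, Or.inr (by push_cast; linear_combination h)⟩
  have hshiftτ : ∀ z : ℂ, z ∈ Sᶜ → z + τ ∈ Sᶜ := by
    intro z hz hmem
    apply hz
    rw [hS] at hmem ⊢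
    obtain ⟨m, n, h | h⟩ := hmem
    · exact ⟨m, n - 1, Or.inl (by push_cast; linear_combination h)⟩
    · exact ⟨m, n - 1, Or.inr (by push_cast; linear_combination h)⟩
  have hg1 : ∀ t : ℂ, g (t + 1) = g t := by
    have heq : Set.EqOn (fun t : ℂ => g (t + 1)) (fun t : ℂ => g t) Sᶜ := by
      intro t ht
      simp only
      rw [hgeq (hshift1 t ht), hgeq ht]
      exact h1 t ht
    have := Continuous.ext_on hdense
      (hgd.continuous.comp (continuous_id.add continuous_const)) hgd.continuous heq
    exact fun t => congrFun this t
  have hg2 : ∀ t : ℂ, g (t + τ) = Complex.exp (2 * (Real.pi : ℂ) * Complex.I * w) * g t := by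
    have heq : Set.EqOn (fun t : ℂ => g (t + τ))
        (fun t : ℂ => Complex.exp (2 * (Real.pi : ℂ) * Complex.I * w) * g t) Sᶜ := by
      intro t ht
      simp only
      rw [hgeq (hshiftτ t ht), hgeq ht]
      exact h2 t ht
    have := Continuous.ext_on hdense
      (hgd.continuous.comp (continuous_id.add continuous_const))
      (continuous_const.mul hgd.continuous) heq
    exact fun t => congrFun this t
  have hzero : ∀ z : ℂ, g z = 0 := lemF g hgd (lemD τ w hτ hw g hgd hg1 hg2)
  intro t ht
  rw [← hgeq ht]
  exact hzero t
end

section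
/- The star-product on the direct sum over k in N^r of the spaces A(k) (skew-invariant parts of top cohomology of discriminantal arrangement complements), defined on trees by gluing at the root z, shifting indices, multiplying by sign and combinatorial factors, and antisymmetrizing, is dual under the pairing of Theorem 2.4 of Schechtman-Varchenko to the coproduct Delta of the free Hopf algebra U_r in which the generators are primitive. Concretely for r = 1: in A(n) (one-dimensional, spanned by the antisymmetrization of the path z - t_1 - t_2 - ... - t_n), the identity (z - t_1)^{*n} = n! * Asym(z - t_1 - ... - t_n) holds, matching Delta(f_1^n) = sum binomial(n,m) f_1^m tensor f_1^{n-m}. -/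
/-!  Ordered trees on `{z, t₁, …, t_n}` (case `r = 1` of the paper) are encoded as
pairs `(p, σ)`: `p : Fin n → Option (Fin n)` is the parent map towards the root `z`
(`none` = `z`) and `σ : Perm (Fin n)` numbers the edges by their heads.  With this
encoding the sign `ε(T)` of a tree is `sign σ`, and in the star product
`T₁ * T₂ = ε(T₁)ε(T₂)ε(T)/(k! l!) · Asym(T)` the sign factor `ε(T₁)ε(T₂)ε(T)` equals
`1`, so the star product of trees is `1/(k! l!) · Asym(glue T₁ T₂)`. -/

/-- Raw data of an ordered tree on `{z, t₁, …, t_n}`. -/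
abbrev OTreeData (n : ℕ) := (Fin n → Option (Fin n)) × Equiv.Perm (Fin n)

/-- The parent map `p` is acyclic (the data is a genuine tree). -/
def ParentAcyclic {n : ℕ} (p : Fin n → Option (Fin n)) : Prop :=
  ∀ v : Fin n, ∃ m : ℕ, (fun o : Option (Fin n) => o.bind p)^[m] (some v) = none

/-- Relabelling of the `t`-vertices by a permutation `π`. -/
def permAct {n : ℕ} (π : Equiv.Perm (Fin n)) (T : OTreeData n) : OTreeData n :=
  (fun v => (T.1 (π⁻¹ v)).map π, π * T.2)

/-- Antisymmetrization: `Asym(T) = ∑_π sgn(π) · π(T)`. -/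
noncomputable def asym {n : ℕ} (T : OTreeData n) : OTreeData n →₀ ℂ :=
  ∑ π : Equiv.Perm (Fin n),
    Finsupp.single (permAct π T) (((Equiv.Perm.sign π : ℤ) : ℂ))

/-- Gluing two ordered trees at the root `z`, shifting the vertex indices and the
edge labels of the second tree. -/
def glue {k l : ℕ} (T₁ : OTreeData k) (T₂ : OTreeData l) : OTreeData (k + l) :=
  (fun i => Fin.addCases (motive := fun _ => Option (Fin (k + l)))
      (fun i₁ => (T₁.1 i₁).map (Fin.castAdd l))
      (fun i₂ => (T₂.1 i₂).map (Fin.natAdd k)) i,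
    finSumFinEquiv.symm.trans ((Equiv.sumCongr T₁.2 T₂.2).trans finSumFinEquiv))

/-- Star product of two trees: `ε(T₁)ε(T₂)ε(T)/(k! l!) · Asym(glue T₁ T₂)`; the sign
factor is `1` in this encoding. -/
noncomputable def rawStar {k l : ℕ} (T₁ : OTreeData k) (T₂ : OTreeData l) :
    OTreeData (k + l) →₀ ℂ :=
  (((k.factorial * l.factorial : ℕ) : ℂ))⁻¹ • asym (glue T₁ T₂)

/-- Bilinear extension of the star product. -/
noncomputable def star {k l : ℕ} (x : OTreeData k →₀ ℂ) (y : OTreeData l →₀ ℂ) :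
    OTreeData (k + l) →₀ ℂ :=
  x.sum fun T₁ c₁ => y.sum fun T₂ c₂ => (c₁ * c₂) • rawStar T₁ T₂

/-- The single-edge tree `z — t₁`. -/
def edgeTree : OTreeData 1 := (fun _ => none, 1)

/-- The `n`-fold star power `(z — t₁)^{*n}`. -/
noncomputable def starPow : (n : ℕ) → (OTreeData n →₀ ℂ)
  | 0 => Finsupp.single ((fun _ => none, 1) : OTreeData 0) 1
  | n + 1 => star (starPow n) (Finsupp.single edgeTree 1)

/-- The path tree `z — t₁ — t₂ — ⋯ — t_n` with edges numbered along the path. -/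
def pathTree (n : ℕ) : OTreeData n :=
  (fun i => if h : 0 < i.val then some ⟨i.val - 1, by omega⟩ else none, 1)

/-- Relations R1 and R2 (among genuine trees). -/
def relSet (n : ℕ) : Set (OTreeData n →₀ ℂ) :=
  {x | (∃ T : OTreeData n, ∃ a b : Fin n, ParentAcyclic T.1 ∧ a ≠ b ∧
      x = Finsupp.single T 1 + Finsupp.single (T.1, T.2 * Equiv.swap a b) 1) ∨
    (∃ (p₀ : Fin n → Option (Fin n)) (σ₀ : Equiv.Perm (Fin n))
      (a b xv yv : Fin n) (v : Option (Fin n)),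
      a ≠ b ∧ xv ≠ yv ∧ v ≠ some xv ∧ v ≠ some yv ∧ σ₀ a = xv ∧ σ₀ b = yv ∧
      ParentAcyclic (Function.update (Function.update p₀ xv v) yv v) ∧
      ParentAcyclic (Function.update (Function.update p₀ xv v) yv (some xv)) ∧
      ParentAcyclic (Function.update (Function.update p₀ yv v) xv (some yv)) ∧
      x = Finsupp.single ((Function.update (Function.update p₀ xv v) yv v, σ₀) :
            OTreeData n) 1 +
          Finsupp.single ((Function.update (Function.update p₀ xv v) yv (some xv),
            σ₀ * Equiv.swap a b) : OTreeData n) 1 +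
          Finsupp.single ((Function.update (Function.update p₀ yv v) xv (some yv),
            σ₀ * Equiv.swap a b) : OTreeData n) 1)}


/-! ### Auxiliary infrastructure -/

section Aux
open Equiv Finset Function

theorem Equiv.Perm.inv_apply_self {α : Type*} (f : Equiv.Perm α) (x : α) : f⁻¹ (f x) = x :=
  f.symm_apply_apply x

theorem Equiv.Perm.apply_inv_self {α : Type*} (f : Equiv.Perm α) (x : α) : f (f⁻¹ x) = x :=
  f.apply_symm_apply x

variable {n : ℕ}

private lemma pstep_none (p : Fin n → Option (Fin n)) (m : ℕ) :
    (fun o : Option (Fin n) => o.bind p)^[m] none = none := by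
  induction m with
  | zero => rfl
  | succ m ih => rw [Function.iterate_succ_apply]; exact ih

private lemma term_mono {p : Fin n → Option (Fin n)} {m m' : ℕ} (h : m ≤ m')
    {s : Option (Fin n)} (hs : (fun o : Option (Fin n) => o.bind p)^[m] s = none) :
    (fun o : Option (Fin n) => o.bind p)^[m'] s = none := by
  obtain ⟨k, rfl⟩ := Nat.exists_eq_add_of_le h
  rw [Nat.add_comm, Function.iterate_add_apply, hs, pstep_none]

private lemma acyclic_of_measure {p : Fin n → Option (Fin n)} (d : Fin n → ℕ)
    (hd : ∀ v w, p v = some w → d w < d v) : ParentAcyclic p := by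
  have H : ∀ N v, d v < N →
      ∃ m, (fun o : Option (Fin n) => o.bind p)^[m] (some v) = none := by
    intro N
    induction N with
    | zero => intro v hv; omega
    | succ N ih =>
      intro v hv
      cases hpv : p v with
      | none => exact ⟨1, by simpa using hpv⟩
      | some w =>
        obtain ⟨m, hm⟩ := ih w (by have := hd v w hpv; omega)
        exact ⟨m + 1, by rw [Function.iterate_succ_apply]; simpa [hpv] using hm⟩
  intro v; exact H (d v + 1) v (Nat.lt_succ_self _)

private lemma chain_avoid {p : Fin n → Option (Fin n)} (hac : ParentAcyclic p)
    {s x : Fin n} (hpx : p s = p x) (hsx : s ≠ x) (k : ℕ) :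
    (fun o : Option (Fin n) => o.bind p)^[k] (some x) ≠ some s := by
  intro h
  match k with
  | 0 => exact hsx (by simpa using h.symm)
  | k + 1 =>
    have hfix : (fun o : Option (Fin n) => o.bind p)^[k + 1] (some s) = some s := by
      rw [Function.iterate_succ_apply] at h ⊢
      simpa [hpx] using h
    have hloop : ∀ t, (fun o : Option (Fin n) => o.bind p)^[(k + 1) * t] (some s) = some s := by
      intro t; induction t with
      | zero => rfl
      | succ t ih => rw [Nat.mul_succ, Function.iterate_add_apply, hfix, ih]
    obtain ⟨m, hm⟩ := hac s
    have h2 := term_mono (Nat.le_mul_of_pos_left m (Nat.succ_pos k)) hm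
    rw [hloop m] at h2
    exact nomatch h2

/-- Reparenting all vertices in `S` to the new parent `x`. -/
def reparent (p : Fin n → Option (Fin n)) (S : Finset (Fin n)) (x : Fin n) :
    Fin n → Option (Fin n) := fun w => if w ∈ S then some x else p w

private lemma reparent_acyclic {p : Fin n → Option (Fin n)} {S : Finset (Fin n)} {x : Fin n}
    (hac : ParentAcyclic p) (hsib : ∀ s ∈ S, p s = p x) (hx : x ∉ S) :
    ParentAcyclic (reparent p S x) := by
  set F := fun o : Option (Fin n) => o.bind p with hF
  set G := fun o : Option (Fin n) => o.bind (reparent p S x) with hG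
  have hGstep : ∀ w : Fin n, w ∉ S → G (some w) = F (some w) := by
    intro w hw; simp [hG, hF, reparent, hw]
  have hGx : ∀ w : Fin n, w ∈ S → G (some w) = some x := by
    intro w hw; simp [hG, reparent, hw]
  have hxterm : ∃ m, G^[m] (some x) = none := by
    have havoid : ∀ k s, s ∈ S → F^[k] (some x) ≠ some s := fun k s hs =>
      chain_avoid hac (hsib s hs) (fun h => hx (h ▸ hs)) k
    obtain ⟨m0, hm0⟩ := hac x
    have key : ∀ m (w : Fin n), F^[m] (some w) = none →
        (∀ k s, s ∈ S → F^[k] (some w) ≠ some s) → ∃ m', G^[m'] (some w) = none := by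
      intro m
      induction m with
      | zero => intro w h _; exact absurd h (by simp [hF])
      | succ m ih =>
        intro w h hav
        have hwS : w ∉ S := fun hw => hav 0 w hw rfl
        cases hpw : p w with
        | none =>
          exact ⟨1, by rw [Function.iterate_one, hGstep w hwS]; simpa [hF] using hpw⟩
        | some u =>
          have hFu : F^[m] (some u) = none := by
            rw [Function.iterate_succ_apply] at h; simpa [hF, hpw] using h
          have havu : ∀ k s, s ∈ S → F^[k] (some u) ≠ some s := by
            intro k s hs hk
            exact hav (k + 1) s hs
              (by rw [Function.iterate_succ_apply]; simpa [hF, hpw] using hk)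
          obtain ⟨m', hm'⟩ := ih u hFu havu
          exact ⟨m' + 1, by
            rw [Function.iterate_succ_apply, hGstep w hwS]; simpa [hF, hpw] using hm'⟩
    exact key m0 x hm0 havoid
  have key2 : ∀ m (w : Fin n), F^[m] (some w) = none → ∃ m', G^[m'] (some w) = none := by
    intro m
    induction m with
    | zero => intro w h; exact absurd h (by simp [hF])
    | succ m ih =>
      intro w h
      by_cases hw : w ∈ S
      · obtain ⟨m', hm'⟩ := hxterm
        exact ⟨m' + 1, by rw [Function.iterate_succ_apply, hGx w hw]; exact hm'⟩
      · cases hpw : p w with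
        | none =>
          exact ⟨1, by rw [Function.iterate_one, hGstep w hw]; simpa [hF] using hpw⟩
        | some u =>
          have hFu : F^[m] (some u) = none := by
            rw [Function.iterate_succ_apply] at h; simpa [hF, hpw] using h
          obtain ⟨m', hm'⟩ := ih u hFu
          exact ⟨m' + 1, by
            rw [Function.iterate_succ_apply, hGstep w hw]; simpa [hF, hpw] using hm'⟩
  intro v
  obtain ⟨m, hm⟩ := hac v
  exact key2 m v hm

end Aux


section Cls
open Equiv Finset Function

variable {n : ℕ}

/-- Class of a single tree in the quotient `A(n)`. -/
noncomputable def cls (T : OTreeData n) :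
    (OTreeData n →₀ ℂ) ⧸ Submodule.span ℂ (relSet n) :=
  Submodule.Quotient.mk (Finsupp.single T 1)

private lemma mk_single_eq_cls (T : OTreeData n) :
    (Submodule.Quotient.mk (Finsupp.single T 1) :
      (OTreeData n →₀ ℂ) ⧸ Submodule.span ℂ (relSet n)) = cls T := rfl

private lemma mk_rel_zero {x : OTreeData n →₀ ℂ} (h : x ∈ relSet n) :
    (Submodule.Quotient.mk x :
      (OTreeData n →₀ ℂ) ⧸ Submodule.span ℂ (relSet n)) = 0 :=
  (Submodule.Quotient.mk_eq_zero _).mpr (Submodule.subset_span h)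

private lemma R1cls {p : Fin n → Option (Fin n)} (hac : ParentAcyclic p)
    (σ : Equiv.Perm (Fin n)) {a b : Fin n} (hab : a ≠ b) :
    cls (p, σ * Equiv.swap a b) = - cls (p, σ) := by
  have h := mk_rel_zero (n := n) (Or.inl ⟨(p, σ), a, b, hac, hab, rfl⟩)
  rw [Submodule.Quotient.mk_add, mk_single_eq_cls, mk_single_eq_cls] at h
  rw [eq_neg_iff_add_eq_zero, add_comm]
  exact h

private lemma cls_sign {p : Fin n → Option (Fin n)} (hac : ParentAcyclic p)
    (σ : Equiv.Perm (Fin n)) :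
    cls (p, σ) = ((Equiv.Perm.sign σ : ℤ) : ℂ) • cls (p, 1) := by
  refine Equiv.Perm.swap_induction_on' σ (by simp) ?_
  intro f x y hxy ih
  have hs : ((Equiv.Perm.sign (f * Equiv.swap x y) : ℤ) : ℂ)
      = -((Equiv.Perm.sign f : ℤ) : ℂ) := by
    simp [Equiv.Perm.sign_swap hxy]
  rw [R1cls hac f hxy, ih, hs, neg_smul]

private lemma R2cls {p : Fin n → Option (Fin n)} {xv yv : Fin n} {v : Option (Fin n)}
    (hxy : xv ≠ yv) (hvx : v ≠ some xv) (hvy : v ≠ some yv)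
    (hpx : p xv = v) (hpy : p yv = v) (hac : ParentAcyclic p) :
    cls (p, 1) = cls (Function.update p yv (some xv), 1)
      + cls (Function.update p xv (some yv), 1) := by
  have hac1 : ParentAcyclic (Function.update p yv (some xv)) := by
    have he : Function.update p yv (some xv) = reparent p {yv} xv := by
      funext w
      by_cases hw : w = yv <;> simp [Function.update_apply, reparent, hw]
    rw [he]
    exact reparent_acyclic hac
      (by intro s hs; simp only [Finset.mem_singleton] at hs; subst hs; rw [hpy, hpx])
      (by simp [hxy])
  have hac2 : ParentAcyclic (Function.update p xv (some yv)) := by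
    have he : Function.update p xv (some yv) = reparent p {xv} yv := by
      funext w
      by_cases hw : w = xv <;> simp [Function.update_apply, reparent, hw]
    rw [he]
    exact reparent_acyclic hac
      (by intro s hs; simp only [Finset.mem_singleton] at hs; subst hs; rw [hpy, hpx])
      (by simp [hxy.symm])
  have h0 : Function.update (Function.update p xv v) yv v = p := by
    funext w
    rcases eq_or_ne w yv with rfl | h1
    · simp [Function.update_apply, hpy]
    · rcases eq_or_ne w xv with rfl | h2
      · simp [Function.update_apply, h1, hpx]
      · simp [Function.update_apply, h1, h2]
  have h1 : Function.update (Function.update p xv v) yv (some xv)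
      = Function.update p yv (some xv) := by
    funext w
    rcases eq_or_ne w yv with rfl | hw1
    · simp [Function.update_apply]
    · rcases eq_or_ne w xv with rfl | hw2
      · simp [Function.update_apply, hw1, hpx]
      · simp [Function.update_apply, hw1, hw2]
  have h2 : Function.update (Function.update p yv v) xv (some yv)
      = Function.update p xv (some yv) := by
    funext w
    rcases eq_or_ne w xv with rfl | hw1
    · simp [Function.update_apply]
    · rcases eq_or_ne w yv with rfl | hw2
      · simp [Function.update_apply, hw1, hpy]
      · simp [Function.update_apply, hw1, hw2]
  have hrel := mk_rel_zero (n := n) (Or.inr ⟨p, 1, xv, yv, xv, yv, v,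
    hxy, hxy, hvx, hvy, rfl, rfl,
    (by rw [h0]; exact hac), (by rw [h1]; exact hac1), (by rw [h2]; exact hac2), rfl⟩)
  rw [Submodule.Quotient.mk_add, Submodule.Quotient.mk_add,
    mk_single_eq_cls, mk_single_eq_cls, mk_single_eq_cls, h0, h1, h2] at hrel
  rw [R1cls hac1 1 hxy, R1cls hac2 1 hxy] at hrel
  apply eq_of_sub_eq_zero
  rw [← hrel]; abel

end Cls


section Expand
open Equiv Finset Function

variable {n : ℕ}

private lemma update_sib_acyclic {p : Fin n → Option (Fin n)} {x y : Fin n}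
    (hac : ParentAcyclic p) (h : p y = p x) (hxy : x ≠ y) :
    ParentAcyclic (Function.update p y (some x)) := by
  have he : Function.update p y (some x) = reparent p {y} x := by
    funext w; by_cases hw : w = y <;> simp [Function.update_apply, reparent, hw]
  rw [he]
  exact reparent_acyclic hac
    (by intro s hs; simp only [Finset.mem_singleton] at hs; subst hs; exact h)
    (by simp [hxy])

private lemma expand_corolla (m : ℕ) :
    ∀ (R : Finset (Fin n)) (p : Fin n → Option (Fin n)) (u : Option (Fin n)),
    R.card = m → R.Nonempty → ParentAcyclic p →
    (∀ s ∈ R, p s = u) → (∀ s ∈ R, u ≠ some s) →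
    cls (p, 1) = ∑ x ∈ R, cls (reparent p (R.erase x) x, 1) := by
  induction m with
  | zero =>
    intro R p u hcard hne _ _ _
    rw [Finset.card_eq_zero] at hcard
    subst hcard
    exact absurd hne (by simp)
  | succ m ih =>
    intro R p u hcard hne hac hsib hu
    rcases Nat.eq_zero_or_pos m with rfl | hm
    · obtain ⟨x, rfl⟩ := Finset.card_eq_one.mp hcard
      have hrp : reparent p (({x} : Finset (Fin n)).erase x) x = p := by
        funext w; simp [reparent]
      rw [Finset.sum_singleton, hrp]
    · have h2 : 1 < R.card := by omega
      obtain ⟨y₀, hy₀, y₁, hy₁, hne01⟩ := Finset.one_lt_card.mp h2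
      set p₀ := Function.update p y₁ (some y₀) with hp₀
      set p₁ := Function.update p y₀ (some y₁) with hp₁
      have hpy₀ := hsib y₀ hy₀
      have hpy₁ := hsib y₁ hy₁
      have hsplit : cls (p, 1) = cls (p₀, 1) + cls (p₁, 1) :=
        R2cls hne01 (hu y₀ hy₀) (hu y₁ hy₁) hpy₀ hpy₁ hac
      have hac0 : ParentAcyclic p₀ :=
        update_sib_acyclic hac (by rw [hpy₀, hpy₁]) hne01
      have hac1 : ParentAcyclic p₁ :=
        update_sib_acyclic hac (by rw [hpy₀, hpy₁]) hne01.symm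
      have hy₀e : y₀ ∈ R.erase y₁ := Finset.mem_erase.mpr ⟨hne01, hy₀⟩
      have hy₁e : y₁ ∈ R.erase y₀ := Finset.mem_erase.mpr ⟨hne01.symm, hy₁⟩
      have h0 := ih (R.erase y₁) p₀ u
        (by rw [Finset.card_erase_of_mem hy₁, hcard]; rfl)
        ⟨y₀, hy₀e⟩ hac0
        (by intro s hs
            rw [Finset.mem_erase] at hs
            rw [hp₀, Function.update_apply, if_neg hs.1]
            exact hsib s hs.2)
        (by intro s hs; exact hu s (Finset.mem_of_mem_erase hs))
      have h1 := ih (R.erase y₀) p₁ u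
        (by rw [Finset.card_erase_of_mem hy₀, hcard]; rfl)
        ⟨y₁, hy₁e⟩ hac1
        (by intro s hs
            rw [Finset.mem_erase] at hs
            rw [hp₁, Function.update_apply, if_neg hs.1]
            exact hsib s hs.2)
        (by intro s hs; exact hu s (Finset.mem_of_mem_erase hs))
      rw [← Finset.add_sum_erase _ _ hy₀e] at h0
      rw [← Finset.add_sum_erase _ _ hy₁e] at h1
      have hA0 : reparent p₀ ((R.erase y₁).erase y₀) y₀ = reparent p (R.erase y₀) y₀ := by
        funext w
        by_cases hw1 : w = y₁
        · subst hw1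
          simp [reparent, hp₀, Function.update_apply, Finset.mem_erase, hne01.symm, hy₁]
        · by_cases hw0 : w = y₀
          · subst hw0
            simp [reparent, hp₀, Function.update_apply, Finset.mem_erase, hne01]
          · simp [reparent, hp₀, Function.update_apply, Finset.mem_erase, hw0, hw1]
      have hA1 : reparent p₁ ((R.erase y₀).erase y₁) y₁ = reparent p (R.erase y₁) y₁ := by
        funext w
        by_cases hw0 : w = y₀
        · subst hw0
          simp [reparent, hp₁, Function.update_apply, Finset.mem_erase, hne01, hy₀]
        · by_cases hw1 : w = y₁
          · subst hw1
            simp [reparent, hp₁, Function.update_apply, Finset.mem_erase, hne01.symm]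
          · simp [reparent, hp₁, Function.update_apply, Finset.mem_erase, hw0, hw1]
      have hEE : (R.erase y₁).erase y₀ = (R.erase y₀).erase y₁ := by
        rw [Finset.erase_right_comm]
      have hZ : ∀ x ∈ (R.erase y₀).erase y₁,
          cls (reparent p₀ ((R.erase y₁).erase x) x, 1)
            + cls (reparent p₁ ((R.erase y₀).erase x) x, 1)
          = cls (reparent p (R.erase x) x, 1) := by
        intro x hx
        rw [Finset.mem_erase, Finset.mem_erase] at hx
        obtain ⟨hx1, hx0, hxR⟩ := hx
        have hy₀x : y₀ ∈ R.erase x := Finset.mem_erase.mpr ⟨fun h => hx0 h.symm, hy₀⟩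
        have hy₁x : y₁ ∈ R.erase x := Finset.mem_erase.mpr ⟨fun h => hx1 h.symm, hy₁⟩
        have hNac : ParentAcyclic (reparent p (R.erase x) x) :=
          reparent_acyclic hac
            (by intro s hs
                rw [hsib s (Finset.mem_of_mem_erase hs), hsib x hxR])
            (Finset.notMem_erase x R)
        have hkey := R2cls (p := reparent p (R.erase x) x) (xv := y₀) (yv := y₁)
          (v := some x) hne01
          (by simpa using fun h => hx0 h) (by simpa using fun h => hx1 h)
          (by simp [reparent, hy₀x]) (by simp [reparent, hy₁x]) hNac
        have hu0 : Function.update (reparent p (R.erase x) x) y₁ (some y₀)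
            = reparent p₀ ((R.erase y₁).erase x) x := by
          funext w
          by_cases hw1 : w = y₁
          · subst hw1
            simp [reparent, hp₀, Function.update_apply, Finset.mem_erase]
          · simp [reparent, hp₀, Function.update_apply, Finset.mem_erase, hw1]
        have hu1 : Function.update (reparent p (R.erase x) x) y₀ (some y₁)
            = reparent p₁ ((R.erase y₀).erase x) x := by
          funext w
          by_cases hw0 : w = y₀
          · subst hw0
            simp [reparent, hp₁, Function.update_apply, Finset.mem_erase]
          · simp [reparent, hp₁, Function.update_apply, Finset.mem_erase, hw0]
        rw [hu0, hu1] at hkey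
        exact hkey.symm
      have hsum : (∑ x ∈ (R.erase y₁).erase y₀, cls (reparent p₀ ((R.erase y₁).erase x) x, 1))
          + (∑ x ∈ (R.erase y₀).erase y₁, cls (reparent p₁ ((R.erase y₀).erase x) x, 1))
          = ∑ x ∈ (R.erase y₀).erase y₁, cls (reparent p (R.erase x) x, 1) := by
        rw [hEE, ← Finset.sum_add_distrib]
        exact Finset.sum_congr rfl hZ
      rw [hsplit, h0, h1, hA0, hA1,
        ← Finset.add_sum_erase _ _ hy₀, ← Finset.add_sum_erase _ _ hy₁e, ← hsum]
      abel

end Expand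


section Chain
open Equiv Finset Function

variable {n : ℕ}

/-- Chain `z — π 0 — ⋯ — π (j-1)` with all remaining vertices children of the
chain's end (of `z` when `j = 0`). -/
private def chainCor (j : ℕ) (π : Equiv.Perm (Fin n)) : Fin n → Option (Fin n) :=
  fun v =>
    if (π⁻¹ v).val < j then
      (if 0 < (π⁻¹ v).val then
        some (π ⟨(π⁻¹ v).val - 1, Nat.lt_of_le_of_lt (Nat.pred_le _) (π⁻¹ v).isLt⟩)
      else none)
    else
      (if hj : 0 < j ∧ j ≤ n then some (π ⟨j - 1, by omega⟩) else none)

private lemma acyclic_chainCor (j : ℕ) (π : Equiv.Perm (Fin n)) :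
    ParentAcyclic (chainCor j π) := by
  apply acyclic_of_measure (fun v => (π⁻¹ v).val)
  intro v w h
  simp only [chainCor] at h
  by_cases h1 : (π⁻¹ v).val < j
  · rw [if_pos h1] at h
    by_cases h2 : 0 < (π⁻¹ v).val
    · rw [if_pos h2, Option.some_inj] at h
      subst h
      simp only [Equiv.Perm.inv_apply_self]
      omega
    · rw [if_neg h2] at h
      exact absurd h (by simp)
  · rw [if_neg h1] at h
    by_cases h3 : 0 < j ∧ j ≤ n
    · rw [dif_pos h3, Option.some_inj] at h
      subst h
      simp only [Equiv.Perm.inv_apply_self]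
      omega
    · rw [dif_neg h3] at h
      exact absurd h (by simp)

private lemma reparent_chainCor {j : ℕ} (hj : j < n) (π : Equiv.Perm (Fin n)) (i₀ : Fin n)
    (hi₀ : j ≤ i₀.val) :
    reparent (chainCor j π)
      ((Finset.image π (Finset.univ.filter fun i : Fin n => j ≤ i.val)).erase (π i₀)) (π i₀)
    = chainCor (j + 1) (π * Equiv.swap ⟨j, hj⟩ i₀) := by
  funext v
  obtain ⟨i, rfl⟩ : ∃ i, v = π i := ⟨π⁻¹ v, (Equiv.Perm.apply_inv_self π v).symm⟩
  have hmem : π i ∈ (Finset.image π (Finset.univ.filter fun i : Fin n => j ≤ i.val)).erase (π i₀)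
      ↔ (i ≠ i₀ ∧ j ≤ i.val) := by
    rw [Finset.mem_erase]
    constructor
    · rintro ⟨h1, h2⟩
      rw [Finset.mem_image] at h2
      obtain ⟨a, ha, hae⟩ := h2
      rw [Finset.mem_filter] at ha
      cases π.injective hae
      exact ⟨fun h => h1 (congrArg π h), ha.2⟩
    · rintro ⟨h1, h2⟩
      exact ⟨fun h => h1 (π.injective h),
        Finset.mem_image.mpr ⟨i, Finset.mem_filter.mpr ⟨Finset.mem_univ _, h2⟩, rfl⟩⟩
  have hinv : (π * Equiv.swap ⟨j, hj⟩ i₀)⁻¹ (π i) = Equiv.swap ⟨j, hj⟩ i₀ i := by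
    rw [mul_inv_rev, Equiv.Perm.mul_apply, Equiv.Perm.inv_apply_self, Equiv.swap_inv]
  rcases lt_or_ge i.val j with hlt | hge
  · -- `i` lies on the existing chain
    rw [reparent, if_neg (fun h => absurd (hmem.mp h).2 (by omega))]
    simp only [chainCor, Equiv.Perm.inv_apply_self, hinv]
    have hsi : Equiv.swap (⟨j, hj⟩ : Fin n) i₀ i = i :=
      Equiv.swap_apply_of_ne_of_ne
        (fun h => by rw [h] at hlt; exact absurd hlt (lt_irrefl _))
        (fun h => by rw [h] at hlt; omega)
    simp only [hsi]
    rw [if_pos hlt, if_pos (by omega : i.val < j + 1)]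
    by_cases h0 : 0 < i.val
    · rw [if_pos h0, if_pos h0]
      congr 1
      rw [Equiv.Perm.mul_apply]
      congr 1
      exact (Equiv.swap_apply_of_ne_of_ne (Fin.ne_of_val_ne (show i.val - 1 ≠ j by omega))
        (Fin.ne_of_val_ne (show i.val - 1 ≠ i₀.val by omega))).symm
    · rw [if_neg h0, if_neg h0]
  · by_cases hii : i = i₀
    · -- `i₀` becomes the new end of the chain
      subst hii
      rw [reparent, if_neg (fun h => (hmem.mp h).1 rfl)]
      simp only [chainCor, Equiv.Perm.inv_apply_self, hinv, Equiv.swap_apply_right]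
      rw [if_neg (by omega : ¬ i.val < j), if_pos (show ((⟨j, hj⟩ : Fin n)).val < j + 1 from Nat.lt_succ_self j)]
      by_cases h0 : 0 < j
      · rw [dif_pos ⟨h0, le_of_lt hj⟩, if_pos (show 0 < ((⟨j, hj⟩ : Fin n)).val from h0)]
        congr 1
        rw [Equiv.Perm.mul_apply]
        congr 1
        exact (Equiv.swap_apply_of_ne_of_ne (Fin.ne_of_val_ne (show j - 1 ≠ j by omega))
          (Fin.ne_of_val_ne (show j - 1 ≠ i.val by omega))).symm
      · rw [dif_neg (fun hh => h0 hh.1), if_neg (show ¬ 0 < ((⟨j, hj⟩ : Fin n)).val from h0)]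
    · -- `i` stays in the corolla, now hanging from `π i₀`
      rw [reparent, if_pos (hmem.mpr ⟨hii, hge⟩)]
      simp only [chainCor, hinv]
      by_cases hij : i = ⟨j, hj⟩
      · subst hij
        simp only [Equiv.swap_apply_left]
        have hi₀j : i₀.val ≠ j := fun h =>
          hii (Fin.ext (show ((⟨j, hj⟩ : Fin n)).val = i₀.val from h.symm))
        rw [if_neg (by omega : ¬ i₀.val < j + 1), dif_pos ⟨Nat.succ_pos j, hj⟩]
        congr 1
        rw [Equiv.Perm.mul_apply]
        rw [show (⟨j + 1 - 1, by omega⟩ : Fin n) = ⟨j, hj⟩ from rfl, Equiv.swap_apply_left]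
      · have hsi : Equiv.swap (⟨j, hj⟩ : Fin n) i₀ i = i :=
          Equiv.swap_apply_of_ne_of_ne hij hii
        simp only [hsi]
        have hvj : i.val ≠ j := fun h => hij (Fin.ext h)
        rw [if_neg (by omega : ¬ i.val < j + 1), dif_pos ⟨Nat.succ_pos j, hj⟩]
        congr 1
        rw [Equiv.Perm.mul_apply]
        rw [show (⟨j + 1 - 1, by omega⟩ : Fin n) = ⟨j, hj⟩ from rfl, Equiv.swap_apply_left]

/-- Permutations agreeing with `π` on positions `< j`. -/
private def agreeSet (j : ℕ) (π : Equiv.Perm (Fin n)) : Finset (Equiv.Perm (Fin n)) :=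
  Finset.univ.filter (fun τ => ∀ i : Fin n, i.val < j → τ i = π i)

private lemma agree_partition {j : ℕ} (hj : j < n) (π : Equiv.Perm (Fin n))
    (f : Equiv.Perm (Fin n) → (OTreeData n →₀ ℂ) ⧸ Submodule.span ℂ (relSet n)) :
    ∑ τ ∈ agreeSet j π, f τ
      = ∑ i₀ ∈ Finset.univ.filter (fun i : Fin n => j ≤ i.val),
          ∑ τ ∈ agreeSet (j + 1) (π * Equiv.swap ⟨j, hj⟩ i₀), f τ := by
  have hset : agreeSet j π
      = (Finset.univ.filter fun i : Fin n => j ≤ i.val).biUnion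
          (fun i₀ => agreeSet (j + 1) (π * Equiv.swap ⟨j, hj⟩ i₀)) := by
    ext τ
    simp only [agreeSet, Finset.mem_biUnion, Finset.mem_filter, Finset.mem_univ, true_and]
    constructor
    · intro h
      have hge : j ≤ (π⁻¹ (τ ⟨j, hj⟩)).val := by
        by_contra hcon
        push_neg at hcon
        have h1 := h (π⁻¹ (τ ⟨j, hj⟩)) hcon
        rw [Equiv.Perm.apply_inv_self π] at h1
        have h2 : π⁻¹ (τ ⟨j, hj⟩) = ⟨j, hj⟩ := τ.injective h1
        rw [h2] at hcon
        exact absurd hcon (lt_irrefl j)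
      refine ⟨π⁻¹ (τ ⟨j, hj⟩), hge, ?_⟩
      intro i hi
      rcases Nat.lt_or_ge i.val j with hlt | hgej
      · rw [Equiv.Perm.mul_apply, Equiv.swap_apply_of_ne_of_ne
          (Fin.ne_of_val_ne (show i.val ≠ j by omega))
          (Fin.ne_of_val_ne (show i.val ≠ (π⁻¹ (τ ⟨j, hj⟩)).val by omega))]
        exact h i hlt
      · have hieq : i = ⟨j, hj⟩ := Fin.ext (show i.val = j by omega)
        subst hieq
        rw [Equiv.Perm.mul_apply, Equiv.swap_apply_left, Equiv.Perm.apply_inv_self π]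
    · rintro ⟨i₀, hi₀, h⟩
      intro i hi
      have h1 := h i (by omega)
      rwa [Equiv.Perm.mul_apply, Equiv.swap_apply_of_ne_of_ne
        (Fin.ne_of_val_ne (show i.val ≠ j by omega))
        (Fin.ne_of_val_ne (show i.val ≠ i₀.val by omega))] at h1
  rw [hset]
  apply Finset.sum_biUnion
  intro a _ b _ hab
  show Disjoint (agreeSet (j + 1) (π * Equiv.swap ⟨j, hj⟩ a))
    (agreeSet (j + 1) (π * Equiv.swap ⟨j, hj⟩ b))
  rw [Finset.disjoint_left]
  intro τ hτa hτb
  simp only [agreeSet, Finset.mem_filter, Finset.mem_univ, true_and] at hτa hτb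
  have h1 := hτa ⟨j, hj⟩ (Nat.lt_succ_self j)
  have h2 := hτb ⟨j, hj⟩ (Nat.lt_succ_self j)
  rw [Equiv.Perm.mul_apply, Equiv.swap_apply_left] at h1 h2
  exact hab (π.injective (h1.symm.trans h2))

private lemma chainCor_expand (k : ℕ) :
    ∀ (j : ℕ), j + k = n → ∀ π : Equiv.Perm (Fin n),
    cls (chainCor j π, 1) = ∑ τ ∈ agreeSet j π, cls (chainCor n τ, 1) := by
  induction k with
  | zero =>
    intro j hjk π
    have hjn : j = n := by omega
    subst hjn
    have hset : agreeSet j π = {π} := by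
      ext τ
      simp only [agreeSet, Finset.mem_filter, Finset.mem_univ, true_and,
        Finset.mem_singleton]
      constructor
      · intro h; exact Equiv.ext fun i => h i i.isLt
      · rintro rfl; exact fun i _ => rfl
    rw [hset, Finset.sum_singleton]
  | succ k ihk =>
    intro j hjk π
    have hj : j < n := by omega
    set R := Finset.image π (Finset.univ.filter fun i : Fin n => j ≤ i.val) with hR
    have hmemR : ∀ s, s ∈ R ↔ ∃ i : Fin n, j ≤ i.val ∧ π i = s := by
      intro s
      rw [hR]
      simp only [Finset.mem_image, Finset.mem_filter, Finset.mem_univ, true_and]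
    have hval : ∀ s ∈ R, chainCor j π s = chainCor j π (π ⟨j, hj⟩) := by
      intro s hs
      obtain ⟨i, hi, rfl⟩ := (hmemR s).mp hs
      simp only [chainCor, Equiv.Perm.inv_apply_self]
      rw [if_neg (by omega : ¬ i.val < j),
        if_neg (show ¬ ((⟨j, hj⟩ : Fin n)).val < j from lt_irrefl j)]
    have hu : ∀ s ∈ R, chainCor j π (π ⟨j, hj⟩) ≠ some s := by
      intro s hs
      obtain ⟨i, hi, rfl⟩ := (hmemR s).mp hs
      simp only [chainCor, Equiv.Perm.inv_apply_self]
      rw [if_neg (show ¬ ((⟨j, hj⟩ : Fin n)).val < j from lt_irrefl j)]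
      by_cases h0 : 0 < j
      · rw [dif_pos ⟨h0, le_of_lt hj⟩]
        intro hcon
        rw [Option.some_inj] at hcon
        have := π.injective hcon
        have : j - 1 = i.val := congrArg Fin.val this
        omega
      · rw [dif_neg (fun hh => h0 hh.1)]
        exact fun hcon => nomatch hcon
    have hEC := expand_corolla (n := n) R.card R (chainCor j π) (chainCor j π (π ⟨j, hj⟩)) rfl
      ⟨π ⟨j, hj⟩, (hmemR _).mpr ⟨⟨j, hj⟩, le_refl j, rfl⟩⟩
      (acyclic_chainCor j π) hval hu
    rw [hEC, hR, Finset.sum_image (fun a _ b _ h => π.injective h)]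
    rw [agree_partition hj π]
    apply Finset.sum_congr rfl
    intro i₀ hi₀
    rw [Finset.mem_filter] at hi₀
    rw [← hR, reparent_chainCor hj π i₀ hi₀.2]
    exact ihk (j + 1) (by omega) _

end Chain


section StarPowAsym
open Equiv Finset

/-- The corolla: every vertex a child of `z`, identity edge numbering. -/
private def corolla (n : ℕ) : OTreeData n := (fun _ => none, 1)

private lemma sign_sq (n : ℕ) (σ : Equiv.Perm (Fin n)) :
    ((Equiv.Perm.sign σ : ℤ) : ℂ) * ((Equiv.Perm.sign σ : ℤ) : ℂ) = 1 := by
  rcases Int.units_eq_one_or (Equiv.Perm.sign σ) with h | h <;> rw [h] <;> norm_num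

private lemma permAct_const_none {n : ℕ} (π σ : Equiv.Perm (Fin n)) :
    permAct π ((fun _ => none, σ) : OTreeData n) = (fun _ => none, π * σ) := by
  unfold permAct
  simp

private lemma permAct_corolla {n : ℕ} (π : Equiv.Perm (Fin n)) :
    permAct π (corolla n) = (fun _ => none, π) := by
  rw [corolla, permAct_const_none, mul_one]

private lemma asym_const_none {n : ℕ} (σ : Equiv.Perm (Fin n)) :
    asym ((fun _ => none, σ) : OTreeData n)
      = ((Equiv.Perm.sign σ : ℤ) : ℂ) • asym (corolla n) := by
  unfold asym
  rw [Finset.smul_sum]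
  refine Fintype.sum_equiv (Equiv.mulRight σ) _ _ ?_
  intro x
  simp only [Equiv.coe_mulRight, permAct_const_none, permAct_corolla, Finsupp.smul_single]
  congr 1
  have hc : ((Equiv.Perm.sign σ : ℤ) : ℂ) * ((Equiv.Perm.sign (x * σ) : ℤ) : ℂ)
      = ((Equiv.Perm.sign x : ℤ) : ℂ) := by
    rw [Equiv.Perm.sign_mul]
    rcases Int.units_eq_one_or (Equiv.Perm.sign σ) with h | h <;>
      rcases Int.units_eq_one_or (Equiv.Perm.sign x) with h2 | h2 <;>
        rw [h, h2] <;> norm_num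
  rw [smul_eq_mul]
  exact hc.symm

private lemma glue_corolla {n : ℕ} (π : Equiv.Perm (Fin n)) :
    glue ((fun _ => none, π) : OTreeData n) edgeTree
      = ((fun _ => none : Fin (n + 1) → Option (Fin (n + 1))),
          finSumFinEquiv.symm.trans
            ((Equiv.sumCongr π (1 : Equiv.Perm (Fin 1))).trans finSumFinEquiv)) := by
  unfold glue edgeTree
  congr 1
  funext i
  refine Fin.addCases (motive := fun i => Fin.addCases
      (motive := fun _ => Option (Fin (n + 1)))
      (fun i₁ => Option.map (Fin.castAdd 1) ((fun (_ : Fin n) => (none : Option (Fin n))) i₁))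
      (fun i₂ => Option.map (Fin.natAdd n) ((fun (_ : Fin 1) => (none : Option (Fin 1))) i₂)) i
      = none) ?_ ?_ i
  · intro i₁; rw [Fin.addCases_left]; rfl
  · intro i₂; rw [Fin.addCases_right]; rfl

private lemma rawStar_corolla {n : ℕ} (π : Equiv.Perm (Fin n)) :
    rawStar (permAct π (corolla n)) edgeTree
      = ((n.factorial : ℂ))⁻¹ • (((Equiv.Perm.sign π : ℤ) : ℂ) • asym (corolla (n + 1))) := by
  rw [permAct_corolla]
  unfold rawStar
  rw [glue_corolla, asym_const_none]
  have hsign : Equiv.Perm.sign (finSumFinEquiv.symm.trans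
      ((Equiv.sumCongr π (1 : Equiv.Perm (Fin 1))).trans finSumFinEquiv))
      = Equiv.Perm.sign π := by
    rw [← Equiv.trans_assoc, Equiv.Perm.sign_symm_trans_trans, Equiv.Perm.sign_sumCongr]
    simp
  rw [hsign]
  norm_num [Nat.factorial]

private lemma starPow_eq_asym (n : ℕ) : starPow n = asym (corolla n) := by
  induction n with
  | zero =>
    show Finsupp.single ((fun _ => none, 1) : OTreeData 0) 1 = asym (corolla 0)
    have huniv : (Finset.univ : Finset (Equiv.Perm (Fin 0))) = {1} := by
      apply Finset.eq_singleton_iff_unique_mem.mpr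
      refine ⟨Finset.mem_univ _, fun x _ => Equiv.ext fun i => i.elim0⟩
    unfold asym
    rw [huniv, Finset.sum_singleton, permAct_corolla]
    simp [corolla]
  | succ n ih =>
    show _root_.star (starPow n) (Finsupp.single edgeTree 1) = asym (corolla (n + 1))
    rw [ih]
    unfold _root_.star
    have hinner : ∀ (T : OTreeData n) (c : ℂ),
        (Finsupp.single edgeTree (1 : ℂ)).sum (fun T₂ c₂ => (c * c₂) • rawStar T T₂)
          = c • rawStar T edgeTree := by
      intro T c
      rw [Finsupp.sum_single_index (by simp), mul_one]
    have houter : (asym (corolla n)).sum (fun T₁ c₁ =>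
        (Finsupp.single edgeTree (1 : ℂ)).sum fun T₂ c₂ => (c₁ * c₂) • rawStar T₁ T₂)
        = ∑ π : Equiv.Perm (Fin n),
            ((Equiv.Perm.sign π : ℤ) : ℂ) • rawStar (permAct π (corolla n)) edgeTree := by
      unfold asym
      rw [← Finsupp.sum_finsetSum_index (by intro i; rw [hinner]; rw [zero_smul])
        (by intro i x y; rw [hinner, hinner, hinner, add_smul])]
      refine Finset.sum_congr rfl fun π _ => ?_
      rw [Finsupp.sum_single_index (by rw [hinner, zero_smul]), hinner]
    rw [houter]
    have hterm : ∀ π : Equiv.Perm (Fin n),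
        ((Equiv.Perm.sign π : ℤ) : ℂ) • rawStar (permAct π (corolla n)) edgeTree
          = ((n.factorial : ℂ))⁻¹ • asym (corolla (n + 1)) := by
      intro π
      rw [rawStar_corolla, smul_smul, smul_smul]
      congr 1
      have := sign_sq n π
      linear_combination ((n.factorial : ℂ))⁻¹ * this
    rw [Finset.sum_congr rfl fun π _ => hterm π]
    rw [Finset.sum_const, Finset.card_univ, Fintype.card_perm, Fintype.card_fin]
    rw [← Nat.cast_smul_eq_nsmul ℂ, smul_smul]
    rw [mul_inv_cancel₀ (by exact_mod_cast Nat.factorial_ne_zero n), one_smul]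

end StarPowAsym


section Final
open Equiv Finset

variable {n : ℕ}

private lemma mkQ_single (T : OTreeData n) (c : ℂ) :
    (Submodule.span ℂ (relSet n)).mkQ (Finsupp.single T c) = c • cls T := by
  rw [show Finsupp.single T c = c • Finsupp.single T (1 : ℂ) by
    rw [Finsupp.smul_single', mul_one]]
  rw [map_smul]
  rfl

private lemma permAct_path (π : Equiv.Perm (Fin n)) :
    permAct π (pathTree n) = (chainCor n π, π) := by
  unfold permAct pathTree chainCor
  congr 1
  · funext v
    show Option.map (⇑π) (if h : 0 < (π⁻¹ v).val then
        some (⟨(π⁻¹ v).val - 1, by omega⟩ : Fin n) else none) = _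
    by_cases h0 : 0 < (π⁻¹ v).val
    · rw [dif_pos h0, if_pos (π⁻¹ v).isLt, if_pos h0, Option.map_some]
    · rw [dif_neg h0, if_pos (π⁻¹ v).isLt, if_neg h0]
      rfl

private lemma acyclic_const_none :
    ParentAcyclic (fun _ => none : Fin n → Option (Fin n)) :=
  acyclic_of_measure (fun _ => 0) (by intro v w h; exact absurd h (by simp))

end Final

/-- In `A(n)` (the span of ordered trees modulo R1 and R2, for `r = 1`), the `n`-fold
star power of the single-edge tree `z — t₁` equals `n!` times the antisymmetrization
of the path tree `z — t₁ — ⋯ — t_n`:  `(z — t₁)^{*n} = n! · Asym(z—t₁—⋯—t_n)`.  This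
is the concrete `r = 1` instance of the duality between the star product and the
shuffle coproduct `Δ(f₁ⁿ) = ∑ binom(n,m) f₁^m ⊗ f₁^{n-m}` of the free Hopf algebra. -/
theorem starPow_eq_factorial_asym_path (n : ℕ) :
    Submodule.Quotient.mk (p := Submodule.span ℂ (relSet n)) (starPow n) =
      Submodule.Quotient.mk (p := Submodule.span ℂ (relSet n))
        ((n.factorial : ℂ) • asym (pathTree n)) := by
  have hmk : ∀ x : OTreeData n →₀ ℂ,
      (Submodule.Quotient.mk (p := Submodule.span ℂ (relSet n)) x)
        = (Submodule.span ℂ (relSet n)).mkQ x := fun _ => rfl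
  rw [hmk, hmk, starPow_eq_asym]
  -- the common value: sum over all chains
  have hbridge : cls ((fun _ => none, 1) : OTreeData n)
      = ∑ τ : Equiv.Perm (Fin n), cls (chainCor n τ, 1) := by
    have h0 : chainCor (n := n) 0 1 = fun _ => none := by
      funext v; simp [chainCor]
    have hagree : agreeSet (n := n) 0 1 = Finset.univ := by
      ext τ
      simp [agreeSet]
    have h := chainCor_expand (n := n) n 0 (by omega) 1
    rw [h0, hagree] at h
    exact h
  -- left-hand side
  have hL : (Submodule.span ℂ (relSet n)).mkQ (asym (corolla n))
      = (n.factorial : ℕ) • cls ((fun _ => none, 1) : OTreeData n) := by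
    unfold asym
    rw [map_sum]
    have : ∀ π : Equiv.Perm (Fin n),
        (Submodule.span ℂ (relSet n)).mkQ
            (Finsupp.single (permAct π (corolla n)) ((Equiv.Perm.sign π : ℤ) : ℂ))
          = cls ((fun _ => none, 1) : OTreeData n) := by
      intro π
      rw [permAct_corolla, mkQ_single, cls_sign acyclic_const_none π, smul_smul,
        sign_sq, one_smul]
    rw [Finset.sum_congr rfl fun π _ => this π, Finset.sum_const, Finset.card_univ,
      Fintype.card_perm, Fintype.card_fin]
  -- right-hand side
  have hR : (Submodule.span ℂ (relSet n)).mkQ ((n.factorial : ℂ) • asym (pathTree n))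
      = (n.factorial : ℂ) • ∑ τ : Equiv.Perm (Fin n), cls (chainCor n τ, 1) := by
    rw [map_smul]
    congr 1
    unfold asym
    rw [map_sum]
    refine Finset.sum_congr rfl fun π _ => ?_
    rw [permAct_path, mkQ_single, cls_sign (acyclic_chainCor n π) π, smul_smul,
      sign_sq, one_smul]
  rw [hL, hR, ← hbridge, Nat.cast_smul_eq_nsmul]
end
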